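/- Reduction in the simply-typed λ-calculus with sums is confluent: if t ⇝* u and t ⇝* u', then there exists a term v such that u ⇝* v and u' ⇝* v. -/

import Mathlib

namespace STLCp

/-- Types of the simply-typed λ-calculus with sums, over base types `B`. -/
inductive Ty (B : Type) : Type
  | base : B → Ty B
  | unit : Ty B
  | empty : Ty B
  | prod : Ty B → Ty B → Ty B
  | sum : Ty B → Ty B → Ty B
  | arr : Ty B → Ty B → Ty B

/-- Terms (de Bruijn style) over a set of constants `C`. -/
inductive Tm (C : Type) : Type
  | cst : C → Tm C
  | var : Nat → Tm C
  | star : Tm C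
  | pair : Tm C → Tm C → Tm C
  | proj1 : Tm C → Tm C
  | proj2 : Tm C → Tm C
  | lam : Tm C → Tm C
  | app : Tm C → Tm C → Tm C
  | inl : Tm C → Tm C
  | inr : Tm C → Tm C
  | raise : Tm C → Tm C
  | case : Tm C → Tm C → Tm C → Tm C

variable {B C : Type}

/-- Lifting a renaming under a binder. -/
def liftRen (ρ : Nat → Nat) : Nat → Nat
  | 0 => 0
  | n + 1 => ρ n + 1

/-- Action of renamings on terms. -/
def rename (ρ : Nat → Nat) : Tm C → Tm C
  | .cst c => .cst c
  | .var n => .var (ρ n)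
  | .star => .star
  | .pair t u => .pair (rename ρ t) (rename ρ u)
  | .proj1 t => .proj1 (rename ρ t)
  | .proj2 t => .proj2 (rename ρ t)
  | .lam t => .lam (rename (liftRen ρ) t)
  | .app t u => .app (rename ρ t) (rename ρ u)
  | .inl t => .inl (rename ρ t)
  | .inr t => .inr (rename ρ t)
  | .raise t => .raise (rename ρ t)
  | .case s bl br => .case (rename ρ s) (rename (liftRen ρ) bl) (rename (liftRen ρ) br)

/-- Lifting a parallel substitution under a binder. -/
def liftSub (σ : Nat → Tm C) : Nat → Tm C
  | 0 => .var 0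
  | n + 1 => rename Nat.succ (σ n)

/-- Action of parallel substitutions on terms, `t[σ]`. -/
def subst (σ : Nat → Tm C) : Tm C → Tm C
  | .cst c => .cst c
  | .var n => σ n
  | .star => .star
  | .pair t u => .pair (subst σ t) (subst σ u)
  | .proj1 t => .proj1 (subst σ t)
  | .proj2 t => .proj2 (subst σ t)
  | .lam t => .lam (subst (liftSub σ) t)
  | .app t u => .app (subst σ t) (subst σ u)
  | .inl t => .inl (subst σ t)
  | .inr t => .inr (subst σ t)
  | .raise t => .raise (subst σ t)
  | .case s bl br => .case (subst σ s) (subst (liftSub σ) bl) (subst (liftSub σ) br)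

/-- The substitution `u..`: maps the last variable to `u`, the identity elsewhere. -/
def sub0 (u : Tm C) : Nat → Tm C
  | 0 => u
  | n + 1 => .var n

/-- Eliminations: application, projections and case analysis. -/
inductive Elim (C : Type) : Type
  | eapp : Tm C → Elim C
  | eproj1 : Elim C
  | eproj2 : Elim C
  | ecase : Tm C → Tm C → Elim C

/-- Plugging a term into an elimination, `e[t]`. -/
def plug : Elim C → Tm C → Tm C
  | .eapp u, t => .app t u
  | .eproj1, t => .proj1 t
  | .eproj2, t => .proj2 t
  | .ecase bl br, t => .case t bl br

/-- Weakening the contents of an elimination (used when pushing it under a binder). -/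
def weakenElim : Elim C → Elim C
  | .eapp u => .eapp (rename Nat.succ u)
  | .eproj1 => .eproj1
  | .eproj2 => .eproj2
  | .ecase bl br => .ecase (rename (liftRen Nat.succ) bl) (rename (liftRen Nat.succ) br)

/-- The β-rules. -/
inductive BetaBase : Tm C → Tm C → Prop
  | proj1 (t u : Tm C) : BetaBase (.proj1 (.pair t u)) t
  | proj2 (t u : Tm C) : BetaBase (.proj2 (.pair t u)) u
  | app (t u : Tm C) : BetaBase (.app (.lam t) u) (subst (sub0 u) t)
  | case_inl (a bl br : Tm C) : BetaBase (.case (.inl a) bl br) (subst (sub0 a) bl)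
  | case_inr (b bl br : Tm C) : BetaBase (.case (.inr b) bl br) (subst (sub0 b) br)

/-- The commuting-conversion rules. -/
inductive CCBase : Tm C → Tm C → Prop
  | raise (e : Elim C) (t : Tm C) : CCBase (plug e (.raise t)) (.raise t)
  | case (e : Elim C) (s bl br : Tm C) :
      CCBase (plug e (.case s bl br))
        (.case s (plug (weakenElim e) bl) (plug (weakenElim e) br))

/-- Congruence closure of a base relation on terms. -/
inductive Cong (R : Tm C → Tm C → Prop) : Tm C → Tm C → Prop
  | base : R t u → Cong R t u
  | pairL : Cong R t t' → Cong R (.pair t u) (.pair t' u)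
  | pairR : Cong R u u' → Cong R (.pair t u) (.pair t u')
  | proj1 : Cong R t t' → Cong R (.proj1 t) (.proj1 t')
  | proj2 : Cong R t t' → Cong R (.proj2 t) (.proj2 t')
  | lam : Cong R t t' → Cong R (.lam t) (.lam t')
  | appL : Cong R t t' → Cong R (.app t u) (.app t' u)
  | appR : Cong R u u' → Cong R (.app t u) (.app t u')
  | inl : Cong R t t' → Cong R (.inl t) (.inl t')
  | inr : Cong R t t' → Cong R (.inr t) (.inr t')
  | raise : Cong R t t' → Cong R (.raise t) (.raise t')
  | caseS : Cong R s s' → Cong R (.case s bl br) (.case s' bl br)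
  | caseL : Cong R bl bl' → Cong R (.case s bl br) (.case s bl' br)
  | caseR : Cong R br br' → Cong R (.case s bl br) (.case s bl br')

/-- One-step β-reduction. -/
def StepBeta : Tm C → Tm C → Prop := Cong BetaBase

/-- One-step commuting-conversion reduction. -/
def StepCC : Tm C → Tm C → Prop := Cong CCBase

/-- One-step reduction (β-rules together with commuting conversions). -/
def Step : Tm C → Tm C → Prop := Cong (fun t u => BetaBase t u ∨ CCBase t u)

/-- Reflexive-transitive closures. -/
def RedsBeta : Tm C → Tm C → Prop := Relation.ReflTransGen StepBeta
def RedsCC : Tm C → Tm C → Prop := Relation.ReflTransGen StepCC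
def Reds : Tm C → Tm C → Prop := Relation.ReflTransGen Step

/-- Typing judgment `Γ ⊢ t : A` over a language given by `tyof : C → Ty B`.
Contexts are lists of types, the head being the last-bound variable. -/
inductive HasType (tyof : C → Ty B) : List (Ty B) → Tm C → Ty B → Prop
  | cst (Γ) (c : C) : HasType tyof Γ (.cst c) (tyof c)
  | var : Γ[n]? = some A → HasType tyof Γ (.var n) A
  | star : HasType tyof Γ .star .unit
  | pair : HasType tyof Γ t A → HasType tyof Γ u A' →
      HasType tyof Γ (.pair t u) (.prod A A')
  | proj1 : HasType tyof Γ p (.prod A A') → HasType tyof Γ (.proj1 p) A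
  | proj2 : HasType tyof Γ p (.prod A A') → HasType tyof Γ (.proj2 p) A'
  | lam : HasType tyof (A :: Γ) t A' → HasType tyof Γ (.lam t) (.arr A A')
  | app : HasType tyof Γ t (.arr A A') → HasType tyof Γ u A →
      HasType tyof Γ (.app t u) A'
  | raise : HasType tyof Γ t .empty → HasType tyof Γ (.raise t) A
  | inl : HasType tyof Γ a A → HasType tyof Γ (.inl a) (.sum A A')
  | inr : HasType tyof Γ b A' → HasType tyof Γ (.inr b) (.sum A A')
  | case : HasType tyof Γ s (.sum A A') → HasType tyof (A :: Γ) bl T →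
      HasType tyof (A' :: Γ) br T → HasType tyof Γ (.case s bl br) T

mutual
  /-- Bidirectional checking judgment `Γ ⊢ t ⇐ A` (normal forms). -/
  inductive Check (tyof : C → Ty B) : List (Ty B) → Tm C → Ty B → Prop
    | star : Check tyof Γ .star .unit
    | pair : Check tyof Γ t A → Check tyof Γ u A' →
        Check tyof Γ (.pair t u) (.prod A A')
    | lam : Check tyof (A :: Γ) t A' → Check tyof Γ (.lam t) (.arr A A')
    | inl : Check tyof Γ a A → Check tyof Γ (.inl a) (.sum A A')
    | inr : Check tyof Γ b A' → Check tyof Γ (.inr b) (.sum A A')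
    | demote : Infer tyof Γ t A → A = A' → Check tyof Γ t A'
    | raise : Infer tyof Γ t .empty → Check tyof Γ (.raise t) A
    | case : Infer tyof Γ s (.sum A A') → Check tyof (A :: Γ) bl T →
        Check tyof (A' :: Γ) br T → Check tyof Γ (.case s bl br) T

  /-- Bidirectional inference judgment `Γ ⊢ t ⇒ A` (neutral forms). -/
  inductive Infer (tyof : C → Ty B) : List (Ty B) → Tm C → Ty B → Prop
    | cst (Γ) (c : C) : Infer tyof Γ (.cst c) (tyof c)
    | var : Γ[n]? = some A → Infer tyof Γ (.var n) A
    | proj1 : Infer tyof Γ p (.prod A A') → Infer tyof Γ (.proj1 p) A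
    | proj2 : Infer tyof Γ p (.prod A A') → Infer tyof Γ (.proj2 p) A'
    | app : Infer tyof Γ t (.arr A A') → Check tyof Γ u A →
        Infer tyof Γ (.app t u) A'
end

/-- The substitution replacing the last variable by `inl` of itself
(used in the η-law for sums). -/
def inlSub : Nat → Tm C
  | 0 => .inl (.var 0)
  | n + 1 => .var (n + 1)

/-- The substitution replacing the last variable by `inr` of itself. -/
def inrSub : Nat → Tm C
  | 0 => .inr (.var 0)
  | n + 1 => .var (n + 1)

/-- Conversion `Γ ⊢ t ≡ u : A`: the least congruent equivalence relation on
well-typed terms containing the β and η laws for all type formers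
(the equational theory of bicartesian closed categories). -/
inductive Conv (tyof : C → Ty B) : List (Ty B) → Tm C → Tm C → Ty B → Prop
  | refl : HasType tyof Γ t A → Conv tyof Γ t t A
  | symm : Conv tyof Γ t u A → Conv tyof Γ u t A
  | trans : Conv tyof Γ t u A → Conv tyof Γ u v A → Conv tyof Γ t v A
  -- congruence
  | pair : Conv tyof Γ t t' A → Conv tyof Γ u u' A' →
      Conv tyof Γ (.pair t u) (.pair t' u') (.prod A A')
  | proj1 : Conv tyof Γ p p' (.prod A A') → Conv tyof Γ (.proj1 p) (.proj1 p') A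
  | proj2 : Conv tyof Γ p p' (.prod A A') → Conv tyof Γ (.proj2 p) (.proj2 p') A'
  | lam : Conv tyof (A :: Γ) t t' A' → Conv tyof Γ (.lam t) (.lam t') (.arr A A')
  | app : Conv tyof Γ t t' (.arr A A') → Conv tyof Γ u u' A →
      Conv tyof Γ (.app t u) (.app t' u') A'
  | inl : Conv tyof Γ a a' A → Conv tyof Γ (.inl a) (.inl a') (.sum A A')
  | inr : Conv tyof Γ b b' A' → Conv tyof Γ (.inr b) (.inr b') (.sum A A')
  | raise : Conv tyof Γ t t' .empty → Conv tyof Γ (.raise t) (.raise t') A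
  | case : Conv tyof Γ s s' (.sum A A') → Conv tyof (A :: Γ) bl bl' T →
      Conv tyof (A' :: Γ) br br' T →
      Conv tyof Γ (.case s bl br) (.case s' bl' br') T
  -- β laws
  | beta_proj1 : HasType tyof Γ t A → HasType tyof Γ u A' →
      Conv tyof Γ (.proj1 (.pair t u)) t A
  | beta_proj2 : HasType tyof Γ t A → HasType tyof Γ u A' →
      Conv tyof Γ (.proj2 (.pair t u)) u A'
  | beta_app : HasType tyof (A :: Γ) t A' → HasType tyof Γ u A →
      Conv tyof Γ (.app (.lam t) u) (subst (sub0 u) t) A'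
  | beta_inl : HasType tyof Γ a A → HasType tyof (A :: Γ) bl T →
      HasType tyof (A' :: Γ) br T →
      Conv tyof Γ (.case (.inl a) bl br) (subst (sub0 a) bl) T
  | beta_inr : HasType tyof Γ b A' → HasType tyof (A :: Γ) bl T →
      HasType tyof (A' :: Γ) br T →
      Conv tyof Γ (.case (.inr b) bl br) (subst (sub0 b) br) T
  -- η laws
  | eta_unit : HasType tyof Γ t .unit → Conv tyof Γ t .star .unit
  | eta_prod : HasType tyof Γ t (.prod A A') →
      Conv tyof Γ t (.pair (.proj1 t) (.proj2 t)) (.prod A A')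
  | eta_arr : HasType tyof Γ t (.arr A A') →
      Conv tyof Γ t (.lam (.app (rename Nat.succ t) (.var 0))) (.arr A A')
  | eta_empty : HasType tyof Γ s .empty → HasType tyof Γ u T →
      Conv tyof Γ u (.raise s) T
  | eta_sum : HasType tyof Γ s (.sum A A') → HasType tyof (.sum A A' :: Γ) u T →
      Conv tyof Γ (subst (sub0 s) u)
        (.case s (subst inlSub u) (subst inrSub u)) T

/-- `t` is covered by the predicate `F`: `t` is a case tree whose nodes are
eliminations of neutrals at positive types and whose leaves satisfy `F`
(in suitably extended contexts). -/
inductive Covered (tyof : C → Ty B) (F : List (Ty B) → Tm C → Prop) :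
    List (Ty B) → Tm C → Prop
  | leaf : F Γ t → Covered tyof F Γ t
  | raise : Infer tyof Γ n .empty → Covered tyof F Γ (.raise n)
  | case : Infer tyof Γ n (.sum A A') → Covered tyof F (A :: Γ) bl →
      Covered tyof F (A' :: Γ) br → Covered tyof F Γ (.case n bl br)

/-- `ρ` is a (typed) renaming from `Δ` to `Γ`. -/
def IsRen (ρ : Nat → Nat) (Δ Γ : List (Ty B)) : Prop :=
  ∀ n A, Γ[n]? = some A → Δ[ρ n]? = some A

/-- Values at a type, defined by induction on the type (logical relation). -/
def Value (tyof : C → Ty B) : Ty B → List (Ty B) → Tm C → Prop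
  | .base b => Covered tyof (fun Δ u => Infer tyof Δ u (.base b))
  | .empty => Covered tyof (fun Δ u => Infer tyof Δ u .empty)
  | .sum A A' => Covered tyof (fun Δ u =>
      Infer tyof Δ u (.sum A A') ∨
      (∃ a, u = .inl a ∧ Value tyof A Δ a) ∨
      (∃ b, u = .inr b ∧ Value tyof A' Δ b))
  | .unit => fun Γ t => Check tyof Γ t .unit
  | .prod A A' => fun Γ t => Check tyof Γ t (.prod A A') ∧
      (∃ v, Reds (.proj1 t) v ∧ Value tyof A Γ v) ∧
      (∃ v, Reds (.proj2 t) v ∧ Value tyof A' Γ v)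
  | .arr A A' => fun Γ t => Check tyof Γ t (.arr A A') ∧
      ∀ Δ ρ, IsRen ρ Δ Γ → ∀ u, Value tyof A Δ u →
        ∃ v, Reds (.app (rename ρ t) u) v ∧ Value tyof A' Δ v

/-- `t` is reducible at `T` in `Γ`: it reduces to a value at `T`. -/
def Reducible (tyof : C → Ty B) (T : Ty B) (Γ : List (Ty B)) (t : Tm C) : Prop :=
  ∃ v, Reds t v ∧ Value tyof T Γ v

/-- Polarised vocabulary of a type: `voc true A = A⁺`, `voc false A = A⁻`. -/
def voc (p : Bool) : Ty B → Set B
  | .base b => if p then {b} else ∅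
  | .unit => ∅
  | .empty => ∅
  | .prod A A' => voc p A ∪ voc p A'
  | .sum A A' => voc p A ∪ voc p A'
  | .arr A A' => voc (!p) A ∪ voc p A'

/-- Polarised vocabulary of a context. -/
def vocCtx (p : Bool) (Γ : List (Ty B)) : Set B :=
  {b | ∃ A ∈ Γ, b ∈ voc p A}

/-- Context partitions `Γ = Γs ⋈ Γt`. -/
inductive Splits {B : Type} : List (Ty B) → List (Ty B) → List (Ty B) → Type
  | nil : Splits [] [] []
  | left (A : Ty B) : Splits Γ Γs Γt → Splits (A :: Γ) (A :: Γs) Γt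
  | right (A : Ty B) : Splits Γ Γs Γt → Splits (A :: Γ) Γs (A :: Γt)

/-- The renaming embedding `Γs` into `Γ` induced by a partition. -/
def Splits.renS {B : Type} : {Γ Γs Γt : List (Ty B)} → Splits Γ Γs Γt → Nat → Nat
  | _, _, _, .nil => id
  | _, _, _, .left _ s => fun n => match n with | 0 => 0 | m + 1 => s.renS m + 1
  | _, _, _, .right _ s => fun n => s.renS n + 1

/-- The renaming embedding `Γt` into `Γ` induced by a partition. -/
def Splits.renT {B : Type} : {Γ Γs Γt : List (Ty B)} → Splits Γ Γs Γt → Nat → Nat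
  | _, _, _, .nil => id
  | _, _, _, .left _ s => fun n => s.renT n + 1
  | _, _, _, .right _ s => fun n => match n with | 0 => 0 | m + 1 => s.renT m + 1

/-- The composite `r[l..]` where `l` lives in one part of the context
(embedded via `ρl`) and the tail variables of `r` live in the other part
(embedded via `ρr`); the result lives in the full context. -/
def splice (ρl ρr : Nat → Nat) (l r : Tm C) : Tm C :=
  subst (fun n => match n with
    | 0 => rename ρl l
    | m + 1 => .var (ρr m)) r

/-- The (empty) constant-typing function for a language without constants. -/
def noCst {B : Type} : Empty → Ty B := fun c => c.elim

/-- The set of constants occurring in a term. -/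
def constsOf : Tm C → Set C
  | .cst c => {c}
  | .var _ => ∅
  | .star => ∅
  | .pair t u => constsOf t ∪ constsOf u
  | .proj1 t => constsOf t
  | .proj2 t => constsOf t
  | .lam t => constsOf t
  | .app t u => constsOf t ∪ constsOf u
  | .inl t => constsOf t
  | .inr t => constsOf t
  | .raise t => constsOf t
  | .case s bl br => constsOf s ∪ constsOf bl ∪ constsOf br


/-! ### Infrastructure: renaming and substitution lemmas -/

theorem liftRen_comp (ρ ρ' : Nat → Nat) : liftRen ρ ∘ liftRen ρ' = liftRen (ρ ∘ ρ') := by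
  funext n; cases n <;> rfl

theorem rename_rename (ρ ρ' : Nat → Nat) (t : Tm C) :
    rename ρ (rename ρ' t) = rename (ρ ∘ ρ') t := by
  induction t generalizing ρ ρ' <;>
    simp only [rename, Function.comp_apply, liftRen_comp, *] <;>
    simp [← liftRen_comp, *]

theorem subst_rename (σ : Nat → Tm C) (ρ : Nat → Nat) (t : Tm C) :
    subst σ (rename ρ t) = subst (σ ∘ ρ) t := by
  have hlift : ∀ σ (ρ : Nat → Nat), (liftSub σ) ∘ (liftRen ρ) = liftSub (C := C) (σ ∘ ρ) := by
    intro σ ρ; funext n; cases n <;> rfl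
  induction t generalizing σ ρ <;>
    simp only [rename, subst, Function.comp_apply, hlift, *]

theorem rename_subst (ρ : Nat → Nat) (σ : Nat → Tm C) (t : Tm C) :
    rename ρ (subst σ t) = subst (fun n => rename ρ (σ n)) t := by
  have hlift : ∀ (ρ : Nat → Nat) σ, (rename (liftRen ρ)) ∘ (liftSub σ)
      = liftSub (C := C) (fun n => rename ρ (σ n)) := by
    intro ρ σ; funext n; cases n with
    | zero => rfl
    | succ m =>
      show rename (liftRen ρ) (rename Nat.succ (σ m)) = rename Nat.succ (rename ρ (σ m))
      rw [rename_rename, rename_rename]; rfl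
  induction t generalizing σ ρ <;>
    simp only [rename, subst, Function.comp_apply, *]
  all_goals
    (first
      | rfl
      | (congr 1 <;> (first | rfl | (rw [← hlift]; rfl) | (try simp [← hlift, Function.comp]))))

theorem subst_subst (σ τ : Nat → Tm C) (t : Tm C) :
    subst σ (subst τ t) = subst (fun n => subst σ (τ n)) t := by
  have hlift : ∀ (σ τ : Nat → Tm C), (subst (liftSub σ)) ∘ (liftSub τ)
      = liftSub (fun n => subst σ (τ n)) := by
    intro σ τ; funext n; cases n with
    | zero => rfl
    | succ m =>
      show subst (liftSub σ) (rename Nat.succ (τ m)) = rename Nat.succ (subst σ (τ m))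
      rw [subst_rename, rename_subst]; rfl
  induction t generalizing σ τ <;>
    simp only [subst, Function.comp_apply, *]
  all_goals congr 1 <;> (first | rfl | (rw [← hlift]; rfl))

theorem subst_var (t : Tm C) : subst (.var) t = t := by
  have hlift : liftSub (C := C) (.var) = .var := by funext n; cases n <;> rfl
  induction t <;> simp only [subst, hlift, *]

theorem subst_ext {σ σ' : Nat → Tm C} (h : ∀ n, σ n = σ' n) (t : Tm C) :
    subst σ t = subst σ' t := by
  have : σ = σ' := funext h
  rw [this]

/-- `t[u..]` after weakening is `t`. -/
theorem subst_sub0_rename (u t : Tm C) :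
    subst (sub0 u) (rename Nat.succ t) = t := by
  rw [subst_rename]
  exact (subst_ext (fun n => rfl) t).trans (subst_var t)

theorem subst_lift_sub0_rename (u t : Tm C) :
    subst (liftSub (sub0 u)) (rename (liftRen Nat.succ) t) = t := by
  rw [subst_rename]
  refine (subst_ext (fun n => ?_) t).trans (subst_var t)
  match n with
  | 0 => rfl
  | n+1 => rfl

/-- Renaming commutes with single substitution. -/
theorem rename_subst_sub0 (ρ : Nat → Nat) (u t : Tm C) :
    rename ρ (subst (sub0 u) t) = subst (sub0 (rename ρ u)) (rename (liftRen ρ) t) := by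
  rw [rename_subst, subst_rename]
  refine subst_ext (fun n => ?_) t
  match n with
  | 0 => rfl
  | n+1 => rfl

/-- Substitution commutes with single substitution. -/
theorem subst_subst_sub0 (σ : Nat → Tm C) (u t : Tm C) :
    subst σ (subst (sub0 u) t) = subst (sub0 (subst σ u)) (subst (liftSub σ) t) := by
  rw [subst_subst, subst_subst]
  refine subst_ext (fun n => ?_) t
  match n with
  | 0 => rfl
  | n+1 =>
    show σ n = subst (sub0 (subst σ u)) (rename Nat.succ (σ n))
    rw [subst_sub0_rename]

/-! ### Parallel β-reduction -/

inductive PB : Tm C → Tm C → Prop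
  | cst (c : C) : PB (.cst c) (.cst c)
  | var (n : Nat) : PB (.var n) (.var n)
  | star : PB .star .star
  | pair : PB t t' → PB u u' → PB (.pair t u) (.pair t' u')
  | proj1 : PB t t' → PB (.proj1 t) (.proj1 t')
  | proj2 : PB t t' → PB (.proj2 t) (.proj2 t')
  | lam : PB t t' → PB (.lam t) (.lam t')
  | app : PB t t' → PB u u' → PB (.app t u) (.app t' u')
  | inl : PB t t' → PB (.inl t) (.inl t')
  | inr : PB t t' → PB (.inr t) (.inr t')
  | raise : PB t t' → PB (.raise t) (.raise t')
  | case : PB s s' → PB bl bl' → PB br br' → PB (.case s bl br) (.case s' bl' br')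
  | beta_proj1 : PB t t' → PB u u' → PB (.proj1 (.pair t u)) t'
  | beta_proj2 : PB t t' → PB u u' → PB (.proj2 (.pair t u)) u'
  | beta_app : PB t t' → PB u u' → PB (.app (.lam t) u) (subst (sub0 u') t')
  | beta_inl : PB a a' → PB bl bl' → PB (.case (.inl a) bl br) (subst (sub0 a') bl')
  | beta_inr : PB b b' → PB br br' → PB (.case (.inr b) bl br) (subst (sub0 b') br')

theorem PB.refl (t : Tm C) : PB t t := by
  induction t
  case cst => exact .cst _
  case var => exact .var _
  case star => exact .star
  case pair => exact .pair ‹_› ‹_›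
  case proj1 => exact .proj1 ‹_›
  case proj2 => exact .proj2 ‹_›
  case lam => exact .lam ‹_›
  case app => exact .app ‹_› ‹_›
  case inl => exact .inl ‹_›
  case inr => exact .inr ‹_›
  case raise => exact .raise ‹_›
  case case => exact .case ‹_› ‹_› ‹_›

theorem PB.rename {t t' : Tm C} (h : PB t t') (ρ : Nat → Nat) :
    PB (rename ρ t) (rename ρ t') := by
  induction h generalizing ρ with
  | cst => exact .cst _
  | var => exact .var _
  | star => exact .star
  | pair _ _ ih1 ih2 => exact .pair (ih1 ρ) (ih2 ρ)
  | proj1 _ ih => exact .proj1 (ih ρ)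
  | proj2 _ ih => exact .proj2 (ih ρ)
  | lam _ ih => exact .lam (ih _)
  | app _ _ ih1 ih2 => exact .app (ih1 ρ) (ih2 ρ)
  | inl _ ih => exact .inl (ih ρ)
  | inr _ ih => exact .inr (ih ρ)
  | raise _ ih => exact .raise (ih ρ)
  | case _ _ _ ih1 ih2 ih3 => exact .case (ih1 ρ) (ih2 _) (ih3 _)
  | beta_proj1 _ _ ih1 ih2 => exact .beta_proj1 (ih1 ρ) (ih2 ρ)
  | beta_proj2 _ _ ih1 ih2 => exact .beta_proj2 (ih1 ρ) (ih2 ρ)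
  | beta_app _ _ ih1 ih2 =>
    simpa only [STLCp.rename, rename_subst_sub0] using PB.beta_app (ih1 (liftRen ρ)) (ih2 ρ)
  | beta_inl _ _ ih1 ih2 =>
    simpa only [STLCp.rename, rename_subst_sub0] using PB.beta_inl (ih1 ρ) (ih2 (liftRen ρ))
  | beta_inr _ _ ih1 ih2 =>
    simpa only [STLCp.rename, rename_subst_sub0] using PB.beta_inr (ih1 ρ) (ih2 (liftRen ρ))

theorem PB.liftSub_pb {σ σ' : Nat → Tm C} (h : ∀ n, PB (σ n) (σ' n)) :
    ∀ n, PB (liftSub σ n) (liftSub σ' n)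
  | 0 => .var 0
  | n+1 => (h n).rename Nat.succ

theorem PB.subst {t t' : Tm C} (h : PB t t') {σ σ' : Nat → Tm C}
    (hσ : ∀ n, PB (σ n) (σ' n)) : PB (subst σ t) (subst σ' t') := by
  induction h generalizing σ σ' with
  | cst => exact .cst _
  | var n => exact hσ n
  | star => exact .star
  | pair _ _ ih1 ih2 => exact .pair (ih1 hσ) (ih2 hσ)
  | proj1 _ ih => exact .proj1 (ih hσ)
  | proj2 _ ih => exact .proj2 (ih hσ)
  | lam _ ih => exact .lam (ih (PB.liftSub_pb hσ))
  | app _ _ ih1 ih2 => exact .app (ih1 hσ) (ih2 hσ)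
  | inl _ ih => exact .inl (ih hσ)
  | inr _ ih => exact .inr (ih hσ)
  | raise _ ih => exact .raise (ih hσ)
  | case _ _ _ ih1 ih2 ih3 =>
    exact .case (ih1 hσ) (ih2 (PB.liftSub_pb hσ)) (ih3 (PB.liftSub_pb hσ))
  | beta_proj1 _ _ ih1 ih2 => exact .beta_proj1 (ih1 hσ) (ih2 hσ)
  | beta_proj2 _ _ ih1 ih2 => exact .beta_proj2 (ih1 hσ) (ih2 hσ)
  | beta_app _ _ ih1 ih2 =>
    simpa only [STLCp.subst, subst_subst_sub0] using
      PB.beta_app (ih1 (PB.liftSub_pb hσ)) (ih2 hσ)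
  | beta_inl _ _ ih1 ih2 =>
    simpa only [STLCp.subst, subst_subst_sub0] using
      PB.beta_inl (ih1 hσ) (ih2 (PB.liftSub_pb hσ))
  | beta_inr _ _ ih1 ih2 =>
    simpa only [STLCp.subst, subst_subst_sub0] using
      PB.beta_inr (ih1 hσ) (ih2 (PB.liftSub_pb hσ))

theorem PB.sub0_pb {u u' : Tm C} (h : PB u u') : ∀ n, PB (sub0 u n) (sub0 u' n)
  | 0 => h
  | n+1 => .var n

theorem PB.subst1 {t t' u u' : Tm C} (ht : PB t t') (hu : PB u u') :
    PB (STLCp.subst (sub0 u) t) (STLCp.subst (sub0 u') t') :=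
  ht.subst hu.sub0_pb

theorem PB.pair_inv {a b v : Tm C} (h : PB (.pair a b) v) :
    ∃ a' b', v = .pair a' b' ∧ PB a a' ∧ PB b b' := by
  cases h with
  | pair h1 h2 => exact ⟨_, _, rfl, h1, h2⟩

theorem PB.lam_inv {a v : Tm C} (h : PB (.lam a) v) :
    ∃ a', v = .lam a' ∧ PB a a' := by
  cases h with
  | lam h1 => exact ⟨_, rfl, h1⟩

theorem PB.inl_inv {a v : Tm C} (h : PB (.inl a) v) :
    ∃ a', v = .inl a' ∧ PB a a' := by
  cases h with
  | inl h1 => exact ⟨_, rfl, h1⟩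

theorem PB.inr_inv {a v : Tm C} (h : PB (.inr a) v) :
    ∃ a', v = .inr a' ∧ PB a a' := by
  cases h with
  | inr h1 => exact ⟨_, rfl, h1⟩

theorem PB.raise_inv {a v : Tm C} (h : PB (.raise a) v) :
    ∃ a', v = .raise a' ∧ PB a a' := by
  cases h with
  | raise h1 => exact ⟨_, rfl, h1⟩

/-- Diamond property for parallel β-reduction. -/
theorem PB.diamond : ∀ {t u v : Tm C}, PB t u → PB t v → ∃ w, PB u w ∧ PB v w := by
  intro t u v h1 h2
  induction h1 generalizing v with
  | cst => exact ⟨v, h2, PB.refl v⟩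
  | var => exact ⟨v, h2, PB.refl v⟩
  | star => exact ⟨v, h2, PB.refl v⟩
  | pair ha hb iha ihb =>
    rcases h2 with _|_|_|⟨ha2,hb2⟩
    obtain ⟨a3, hA, hA2⟩ := iha ha2
    obtain ⟨b3, hB, hB2⟩ := ihb hb2
    exact ⟨.pair a3 b3, .pair hA hB, .pair hA2 hB2⟩
  | proj1 ha iha =>
    cases h2 with
    | proj1 ha2 =>
      obtain ⟨a3, hA, hA2⟩ := iha ha2
      exact ⟨.proj1 a3, .proj1 hA, .proj1 hA2⟩
    | beta_proj1 hx hy =>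
      obtain ⟨x', y', rfl, hx1, hy1⟩ := ha.pair_inv
      obtain ⟨x3, hX, hX2⟩ := iha (.pair hx hy)
      obtain ⟨x4, y4, rfl, h4, h5⟩ := hX.pair_inv
      obtain ⟨x4', y4', heq, h4', h5'⟩ := hX2.pair_inv
      cases heq
      exact ⟨x4, .beta_proj1 h4 h5, h4'⟩
    | _ => skip
  | proj2 ha iha =>
    cases h2 with
    | proj2 ha2 =>
      obtain ⟨a3, hA, hA2⟩ := iha ha2
      exact ⟨.proj2 a3, .proj2 hA, .proj2 hA2⟩
    | beta_proj2 hx hy =>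
      obtain ⟨x', y', rfl, hx1, hy1⟩ := ha.pair_inv
      obtain ⟨x3, hX, hX2⟩ := iha (.pair hx hy)
      obtain ⟨x4, y4, rfl, h4, h5⟩ := hX.pair_inv
      obtain ⟨x4', y4', heq, h4', h5'⟩ := hX2.pair_inv
      cases heq
      exact ⟨y4, .beta_proj2 h4 h5, h5'⟩
  | lam ha iha =>
    rcases h2 with _|_|_|_|_|_|⟨ha2⟩
    obtain ⟨a3, hA, hA2⟩ := iha ha2
    exact ⟨.lam a3, .lam hA, .lam hA2⟩
  | app hf ha ihf iha =>
    cases h2 with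
    | app hf2 ha2 =>
      obtain ⟨f3, hF, hF2⟩ := ihf hf2
      obtain ⟨a3, hA, hA2⟩ := iha ha2
      exact ⟨.app f3 a3, .app hF hA, .app hF2 hA2⟩
    | beta_app hb2 ha2 =>
      obtain ⟨b1, rfl, hb1⟩ := hf.lam_inv
      obtain ⟨f3, hF, hF2⟩ := ihf (.lam hb2)
      obtain ⟨b3, rfl, hb3⟩ := hF.lam_inv
      obtain ⟨b3', heq, hb3'⟩ := hF2.lam_inv
      cases heq
      obtain ⟨a3, hA, hA2⟩ := iha ha2
      exact ⟨STLCp.subst (sub0 a3) b3, .beta_app hb3 hA, PB.subst1 hb3' hA2⟩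
  | inl ha iha =>
    rcases h2 with _|_|_|_|_|_|_|_|⟨ha2⟩
    obtain ⟨a3, hA, hA2⟩ := iha ha2
    exact ⟨.inl a3, .inl hA, .inl hA2⟩
  | inr ha iha =>
    rcases h2 with _|_|_|_|_|_|_|_|_|⟨ha2⟩
    obtain ⟨a3, hA, hA2⟩ := iha ha2
    exact ⟨.inr a3, .inr hA, .inr hA2⟩
  | raise ha iha =>
    rcases h2 with _|_|_|_|_|_|_|_|_|_|⟨ha2⟩
    obtain ⟨a3, hA, hA2⟩ := iha ha2
    exact ⟨.raise a3, .raise hA, .raise hA2⟩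
  | case hs hbl hbr ihs ihbl ihbr =>
    cases h2 with
    | case hs2 hbl2 hbr2 =>
      obtain ⟨s3, hS, hS2⟩ := ihs hs2
      obtain ⟨l3, hL, hL2⟩ := ihbl hbl2
      obtain ⟨r3, hR, hR2⟩ := ihbr hbr2
      exact ⟨.case s3 l3 r3, .case hS hL hR, .case hS2 hL2 hR2⟩
    | beta_inl ha2 hbl2 =>
      obtain ⟨a1, rfl, ha1⟩ := hs.inl_inv
      obtain ⟨s3, hS, hS2⟩ := ihs (.inl ha2)
      obtain ⟨a3, rfl, ha3⟩ := hS.inl_inv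
      obtain ⟨a3', heq, ha3'⟩ := hS2.inl_inv
      cases heq
      obtain ⟨l3, hL, hL2⟩ := ihbl hbl2
      exact ⟨STLCp.subst (sub0 a3) l3, .beta_inl ha3 hL, PB.subst1 hL2 ha3'⟩
    | beta_inr ha2 hbr2 =>
      obtain ⟨a1, rfl, ha1⟩ := hs.inr_inv
      obtain ⟨s3, hS, hS2⟩ := ihs (.inr ha2)
      obtain ⟨a3, rfl, ha3⟩ := hS.inr_inv
      obtain ⟨a3', heq, ha3'⟩ := hS2.inr_inv
      cases heq
      obtain ⟨r3, hR, hR2⟩ := ihbr hbr2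
      exact ⟨STLCp.subst (sub0 a3) r3, .beta_inr ha3 hR, PB.subst1 hR2 ha3'⟩
  | beta_proj1 hx hy ihx ihy =>
    cases h2 with
    | proj1 ha2 =>
      obtain ⟨x2, y2, rfl, hx2, hy2⟩ := ha2.pair_inv
      obtain ⟨x3, hX, hX2⟩ := ihx hx2
      obtain ⟨y3, hY, hY2⟩ := ihy hy2
      exact ⟨x3, hX, .beta_proj1 hX2 hY2⟩
    | beta_proj1 hx2 hy2 =>
      obtain ⟨x3, hX, hX2⟩ := ihx hx2
      exact ⟨x3, hX, hX2⟩
  | beta_proj2 hx hy ihx ihy =>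
    cases h2 with
    | proj2 ha2 =>
      obtain ⟨x2, y2, rfl, hx2, hy2⟩ := ha2.pair_inv
      obtain ⟨x3, hX, hX2⟩ := ihx hx2
      obtain ⟨y3, hY, hY2⟩ := ihy hy2
      exact ⟨y3, hY, .beta_proj2 hX2 hY2⟩
    | beta_proj2 hx2 hy2 =>
      obtain ⟨y3, hY, hY2⟩ := ihy hy2
      exact ⟨y3, hY, hY2⟩
  | beta_app hb ha ihb iha =>
    cases h2 with
    | app hf2 ha2 =>
      obtain ⟨b2, rfl, hb2⟩ := hf2.lam_inv
      obtain ⟨b3, hB, hB2⟩ := ihb hb2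
      obtain ⟨a3, hA, hA2⟩ := iha ha2
      exact ⟨STLCp.subst (sub0 a3) b3, PB.subst1 hB hA, .beta_app hB2 hA2⟩
    | beta_app hb2 ha2 =>
      obtain ⟨b3, hB, hB2⟩ := ihb hb2
      obtain ⟨a3, hA, hA2⟩ := iha ha2
      exact ⟨STLCp.subst (sub0 a3) b3, PB.subst1 hB hA, PB.subst1 hB2 hA2⟩
  | beta_inl ha hl iha ihl =>
    cases h2 with
    | case hs2 hbl2 hbr2 =>
      obtain ⟨a2, rfl, ha2⟩ := hs2.inl_inv
      obtain ⟨a3, hA, hA2⟩ := iha ha2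
      obtain ⟨l3, hL, hL2⟩ := ihl hbl2
      exact ⟨STLCp.subst (sub0 a3) l3, PB.subst1 hL hA, .beta_inl hA2 hL2⟩
    | beta_inl ha2 hl2 =>
      obtain ⟨a3, hA, hA2⟩ := iha ha2
      obtain ⟨l3, hL, hL2⟩ := ihl hl2
      exact ⟨STLCp.subst (sub0 a3) l3, PB.subst1 hL hA, PB.subst1 hL2 hA2⟩
  | beta_inr ha hr iha ihr =>
    cases h2 with
    | case hs2 hbl2 hbr2 =>
      obtain ⟨a2, rfl, ha2⟩ := hs2.inr_inv
      obtain ⟨a3, hA, hA2⟩ := iha ha2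
      obtain ⟨r3, hR, hR2⟩ := ihr hbr2
      exact ⟨STLCp.subst (sub0 a3) r3, PB.subst1 hR hA, .beta_inr hA2 hR2⟩
    | beta_inr ha2 hr2 =>
      obtain ⟨a3, hA, hA2⟩ := iha ha2
      obtain ⟨r3, hR, hR2⟩ := ihr hr2
      exact ⟨STLCp.subst (sub0 a3) r3, PB.subst1 hR hA, PB.subst1 hR2 hA2⟩

/-! ### Reflexive-transitive closure congruence helpers -/

section RedsCong
variable {R : Tm C → Tm C → Prop}

open Relation

theorem redsCong {f : Tm C → Tm C} (hf : ∀ {x y : Tm C}, Cong R x y → Cong R (f x) (f y))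
    {a b : Tm C} (h : ReflTransGen (Cong R) a b) :
    ReflTransGen (Cong R) (f a) (f b) :=
  ReflTransGen.lift f (fun _ _ h => hf h) _ _ h

theorem redsCong_pair {a a' b b' : Tm C} (ha : ReflTransGen (Cong R) a a')
    (hb : ReflTransGen (Cong R) b b') :
    ReflTransGen (Cong R) (.pair a b) (.pair a' b') :=
  (redsCong (fun h => Cong.pairL h) ha).trans (redsCong (fun h => Cong.pairR h) hb)

theorem redsCong_app {a a' b b' : Tm C} (ha : ReflTransGen (Cong R) a a')
    (hb : ReflTransGen (Cong R) b b') :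
    ReflTransGen (Cong R) (.app a b) (.app a' b') :=
  (redsCong (fun h => Cong.appL h) ha).trans (redsCong (fun h => Cong.appR h) hb)

theorem redsCong_case {s s' bl bl' br br' : Tm C} (hs : ReflTransGen (Cong R) s s')
    (hl : ReflTransGen (Cong R) bl bl') (hr : ReflTransGen (Cong R) br br') :
    ReflTransGen (Cong R) (.case s bl br) (.case s' bl' br') :=
  ((redsCong (fun h => Cong.caseS h) hs).trans
    (redsCong (fun h => Cong.caseL h) hl)).trans
      (redsCong (fun h => Cong.caseR h) hr)

end RedsCong

/-- A congruence of a disjunction splits. -/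
theorem cong_or_iff {R S : Tm C → Tm C → Prop} {t u : Tm C} :
    Cong (fun a b => R a b ∨ S a b) t u ↔ Cong R t u ∨ Cong S t u := by
  constructor
  · intro h
    induction h with
    | base h => exact h.imp .base .base
    | pairL _ ih => exact ih.imp .pairL .pairL
    | pairR _ ih => exact ih.imp .pairR .pairR
    | proj1 _ ih => exact ih.imp .proj1 .proj1
    | proj2 _ ih => exact ih.imp .proj2 .proj2
    | lam _ ih => exact ih.imp .lam .lam
    | appL _ ih => exact ih.imp .appL .appL
    | appR _ ih => exact ih.imp .appR .appR
    | inl _ ih => exact ih.imp .inl .inl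
    | inr _ ih => exact ih.imp .inr .inr
    | raise _ ih => exact ih.imp .raise .raise
    | caseS _ ih => exact ih.imp .caseS .caseS
    | caseL _ ih => exact ih.imp .caseL .caseL
    | caseR _ ih => exact ih.imp .caseR .caseR
  · have mono : ∀ (P Q : Tm C → Tm C → Prop), (∀ a b, P a b → Q a b) →
        ∀ {t u}, Cong P t u → Cong Q t u := by
      intro P Q hPQ t u h
      induction h with
      | base h => exact .base (hPQ _ _ h)
      | pairL _ ih => exact .pairL ih
      | pairR _ ih => exact .pairR ih
      | proj1 _ ih => exact .proj1 ih
      | proj2 _ ih => exact .proj2 ih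
      | lam _ ih => exact .lam ih
      | appL _ ih => exact .appL ih
      | appR _ ih => exact .appR ih
      | inl _ ih => exact .inl ih
      | inr _ ih => exact .inr ih
      | raise _ ih => exact .raise ih
      | caseS _ ih => exact .caseS ih
      | caseL _ ih => exact .caseL ih
      | caseR _ ih => exact .caseR ih
    rintro (h | h)
    · exact mono _ _ (fun _ _ => Or.inl) h
    · exact mono _ _ (fun _ _ => Or.inr) h

theorem step_iff {t u : Tm C} : Step t u ↔ StepBeta t u ∨ StepCC t u := cong_or_iff

theorem stepBeta_pb {t u : Tm C} (h : StepBeta t u) : PB t u := by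
  induction h with
  | base h =>
    cases h with
    | proj1 => exact .beta_proj1 (PB.refl _) (PB.refl _)
    | proj2 => exact .beta_proj2 (PB.refl _) (PB.refl _)
    | app => exact .beta_app (PB.refl _) (PB.refl _)
    | case_inl => exact .beta_inl (PB.refl _) (PB.refl _)
    | case_inr => exact .beta_inr (PB.refl _) (PB.refl _)
  | pairL _ ih => exact .pair ih (PB.refl _)
  | pairR _ ih => exact .pair (PB.refl _) ih
  | proj1 _ ih => exact .proj1 ih
  | proj2 _ ih => exact .proj2 ih
  | lam _ ih => exact .lam ih
  | appL _ ih => exact .app ih (PB.refl _)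
  | appR _ ih => exact .app (PB.refl _) ih
  | inl _ ih => exact .inl ih
  | inr _ ih => exact .inr ih
  | raise _ ih => exact .raise ih
  | caseS _ ih => exact .case ih (PB.refl _) (PB.refl _)
  | caseL _ ih => exact .case (PB.refl _) ih (PB.refl _)
  | caseR _ ih => exact .case (PB.refl _) (PB.refl _) ih

theorem pb_redsBeta {t u : Tm C} (h : PB t u) : RedsBeta t u := by
  induction h with
  | cst => exact .refl
  | var => exact .refl
  | star => exact .refl
  | pair _ _ ih1 ih2 => exact redsCong_pair ih1 ih2
  | proj1 _ ih => exact redsCong (fun h => Cong.proj1 h) ih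
  | proj2 _ ih => exact redsCong (fun h => Cong.proj2 h) ih
  | lam _ ih => exact redsCong (fun h => Cong.lam h) ih
  | app _ _ ih1 ih2 => exact redsCong_app ih1 ih2
  | inl _ ih => exact redsCong (fun h => Cong.inl h) ih
  | inr _ ih => exact redsCong (fun h => Cong.inr h) ih
  | raise _ ih => exact redsCong (fun h => Cong.raise h) ih
  | case _ _ _ ih1 ih2 ih3 => exact redsCong_case ih1 ih2 ih3
  | beta_proj1 _ _ ih1 ih2 =>
    exact (redsCong (fun h => Cong.proj1 h) (redsCong_pair ih1 ih2)).tail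
      (Cong.base (.proj1 _ _))
  | beta_proj2 _ _ ih1 ih2 =>
    exact (redsCong (fun h => Cong.proj2 h) (redsCong_pair ih1 ih2)).tail
      (Cong.base (.proj2 _ _))
  | beta_app _ _ ih1 ih2 =>
    exact (redsCong_app (redsCong (fun h => Cong.lam h) ih1) ih2).tail
      (Cong.base (.app _ _))
  | beta_inl _ _ ih1 ih2 =>
    exact (redsCong_case (redsCong (fun h => Cong.inl h) ih1) ih2 .refl).tail
      (Cong.base (.case_inl _ _ _))
  | beta_inr _ _ ih1 ih2 =>
    exact (redsCong_case (redsCong (fun h => Cong.inr h) ih1) .refl ih2).tail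
      (Cong.base (.case_inr _ _ _))

open Relation in
theorem rtg_pb_iff {a b : Tm C} : ReflTransGen PB a b ↔ RedsBeta a b := by
  constructor
  · intro h
    have : ReflTransGen RedsBeta a b := ReflTransGen.mono (fun _ _ h => pb_redsBeta h) _ _ h
    have := reflTransGen_idem (r := StepBeta) ▸ this
    exact this
  · exact ReflTransGen.mono (fun _ _ h => stepBeta_pb h) _ _

/-- Confluence of β-reduction. -/
theorem redsBeta_confluent {t u v : Tm C} (h1 : RedsBeta t u) (h2 : RedsBeta t v) :
    ∃ w, RedsBeta u w ∧ RedsBeta v w := by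
  rw [← rtg_pb_iff] at h1 h2
  simp only [← rtg_pb_iff]
  have := Relation.church_rosser
    (r := PB (C := C))
    (fun a b c hab hac => by
      obtain ⟨d, hbd, hcd⟩ := PB.diamond hab hac
      exact ⟨d, .single hbd, .single hcd⟩) h1 h2
  obtain ⟨d, h1, h2⟩ := this
  exact ⟨d, h1, h2⟩

/-! ### Commuting conversions: renaming and substitution stability -/

def renameElim (ρ : Nat → Nat) : Elim C → Elim C
  | .eapp u => .eapp (rename ρ u)
  | .eproj1 => .eproj1
  | .eproj2 => .eproj2
  | .ecase bl br => .ecase (rename (liftRen ρ) bl) (rename (liftRen ρ) br)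

def substElim (σ : Nat → Tm C) : Elim C → Elim C
  | .eapp u => .eapp (subst σ u)
  | .eproj1 => .eproj1
  | .eproj2 => .eproj2
  | .ecase bl br => .ecase (subst (liftSub σ) bl) (subst (liftSub σ) br)

theorem plug_rename (ρ : Nat → Nat) (e : Elim C) (t : Tm C) :
    rename ρ (plug e t) = plug (renameElim ρ e) (rename ρ t) := by
  cases e <;> rfl

theorem plug_subst (σ : Nat → Tm C) (e : Elim C) (t : Tm C) :
    subst σ (plug e t) = plug (substElim σ e) (subst σ t) := by
  cases e <;> rfl

theorem liftRen_succ_comm (ρ : Nat → Nat) :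
    (liftRen ρ) ∘ Nat.succ = Nat.succ ∘ ρ := by
  funext n; rfl

theorem weakenElim_rename (ρ : Nat → Nat) (e : Elim C) :
    renameElim (liftRen ρ) (weakenElim e) = weakenElim (renameElim ρ e) := by
  cases e <;> simp [renameElim, weakenElim, rename_rename, liftRen_comp, liftRen_succ_comm]

theorem weakenElim_subst (σ : Nat → Tm C) (e : Elim C) :
    substElim (liftSub σ) (weakenElim e) = weakenElim (substElim σ e) := by
  cases e with
  | eapp u =>
    show Elim.eapp (subst (liftSub σ) (rename Nat.succ u)) = .eapp (rename Nat.succ (subst σ u))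
    rw [subst_rename, rename_subst]
    rfl
  | eproj1 => rfl
  | eproj2 => rfl
  | ecase bl br =>
    show Elim.ecase (subst (liftSub (liftSub σ)) (rename (liftRen Nat.succ) bl)) _
        = .ecase (rename (liftRen Nat.succ) (subst (liftSub σ) bl)) _
    have key : ∀ (b : Tm C), subst (liftSub (liftSub σ)) (rename (liftRen Nat.succ) b)
        = rename (liftRen Nat.succ) (subst (liftSub σ) b) := by
      intro b
      rw [subst_rename, rename_subst]
      refine subst_ext (fun n => ?_) b
      match n with
      | 0 => rfl
      | n+1 =>
        show rename Nat.succ (liftSub σ (n+1)) = rename (liftRen Nat.succ) (liftSub σ (n+1))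
        show rename Nat.succ (rename Nat.succ (σ n))
            = rename (liftRen Nat.succ) (rename Nat.succ (σ n))
        rw [rename_rename, rename_rename, liftRen_succ_comm]
    rw [key, key]

theorem ccbase_rename {t u : Tm C} (h : CCBase t u) (ρ : Nat → Nat) :
    CCBase (rename ρ t) (rename ρ u) := by
  cases h with
  | raise e t =>
    have := CCBase.raise (renameElim ρ e) (rename ρ t)
    simpa [plug_rename, STLCp.rename] using this
  | case e s bl br =>
    have := CCBase.case (renameElim ρ e) (rename ρ s)
      (rename (liftRen ρ) bl) (rename (liftRen ρ) br)
    simpa [plug_rename, STLCp.rename, weakenElim_rename] using this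

theorem stepCC_rename {t u : Tm C} (h : StepCC t u) (ρ : Nat → Nat) :
    StepCC (rename ρ t) (rename ρ u) := by
  induction h generalizing ρ with
  | base h => exact .base (ccbase_rename h ρ)
  | pairL _ ih => exact .pairL (ih ρ)
  | pairR _ ih => exact .pairR (ih ρ)
  | proj1 _ ih => exact .proj1 (ih ρ)
  | proj2 _ ih => exact .proj2 (ih ρ)
  | lam _ ih => exact .lam (ih _)
  | appL _ ih => exact .appL (ih ρ)
  | appR _ ih => exact .appR (ih ρ)
  | inl _ ih => exact .inl (ih ρ)
  | inr _ ih => exact .inr (ih ρ)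
  | raise _ ih => exact .raise (ih ρ)
  | caseS _ ih => exact .caseS (ih ρ)
  | caseL _ ih => exact .caseL (ih _)
  | caseR _ ih => exact .caseR (ih _)

theorem ccbase_subst {t u : Tm C} (h : CCBase t u) (σ : Nat → Tm C) :
    CCBase (subst σ t) (subst σ u) := by
  cases h with
  | raise e t =>
    have := CCBase.raise (substElim σ e) (subst σ t)
    simpa [plug_subst, STLCp.subst] using this
  | case e s bl br =>
    have := CCBase.case (substElim σ e) (subst σ s)
      (subst (liftSub σ) bl) (subst (liftSub σ) br)
    simpa [plug_subst, STLCp.subst, weakenElim_subst] using this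

theorem stepCC_subst {t u : Tm C} (h : StepCC t u) (σ : Nat → Tm C) :
    StepCC (subst σ t) (subst σ u) := by
  induction h generalizing σ with
  | base h => exact .base (ccbase_subst h σ)
  | pairL _ ih => exact .pairL (ih σ)
  | pairR _ ih => exact .pairR (ih σ)
  | proj1 _ ih => exact .proj1 (ih σ)
  | proj2 _ ih => exact .proj2 (ih σ)
  | lam _ ih => exact .lam (ih _)
  | appL _ ih => exact .appL (ih σ)
  | appR _ ih => exact .appR (ih σ)
  | inl _ ih => exact .inl (ih σ)
  | inr _ ih => exact .inr (ih σ)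
  | raise _ ih => exact .raise (ih σ)
  | caseS _ ih => exact .caseS (ih σ)
  | caseL _ ih => exact .caseL (ih _)
  | caseR _ ih => exact .caseR (ih _)

theorem redsCC_subst_left {t u : Tm C} (h : RedsCC t u) (σ : Nat → Tm C) :
    RedsCC (subst σ t) (subst σ u) :=
  Relation.ReflTransGen.lift (subst σ) (fun _ _ h => stepCC_subst h σ) _ _ h

theorem redsCC_rename {t u : Tm C} (h : RedsCC t u) (ρ : Nat → Nat) :
    RedsCC (rename ρ t) (rename ρ u) :=
  Relation.ReflTransGen.lift (rename ρ) (fun _ _ h => stepCC_rename h ρ) _ _ h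

/-- cc-reduction in the substituted positions. -/
theorem redsCC_subst_right {σ σ' : Nat → Tm C} (hσ : ∀ n, RedsCC (σ n) (σ' n)) (t : Tm C) :
    RedsCC (subst σ t) (subst σ' t) := by
  induction t generalizing σ σ' with
  | cst c => exact .refl
  | var n => exact hσ n
  | star => exact .refl
  | pair a b iha ihb => exact redsCong_pair (iha hσ) (ihb hσ)
  | proj1 a ih => exact redsCong (fun h => Cong.proj1 h) (ih hσ)
  | proj2 a ih => exact redsCong (fun h => Cong.proj2 h) (ih hσ)
  | lam a ih =>
    refine redsCong (fun h => Cong.lam h) (ih ?_)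
    intro n
    match n with
    | 0 => exact .refl
    | n+1 => exact redsCC_rename (hσ n) Nat.succ
  | app a b iha ihb => exact redsCong_app (iha hσ) (ihb hσ)
  | inl a ih => exact redsCong (fun h => Cong.inl h) (ih hσ)
  | inr a ih => exact redsCong (fun h => Cong.inr h) (ih hσ)
  | raise a ih => exact redsCong (fun h => Cong.raise h) (ih hσ)
  | case s bl br ihs ihl ihr =>
    have hlift : ∀ n, RedsCC (liftSub σ n) (liftSub σ' n) := by
      intro n
      match n with
      | 0 => exact .refl
      | n+1 => exact redsCC_rename (hσ n) Nat.succ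
    exact redsCong_case (ihs hσ) (ihl hlift) (ihr hlift)

theorem redsCC_sub0 {a a' : Tm C} (h : RedsCC a a') (t : Tm C) :
    RedsCC (subst (sub0 a) t) (subst (sub0 a') t) := by
  refine redsCC_subst_right (fun n => ?_) t
  match n with
  | 0 => exact h
  | n+1 => exact .refl

/-! ### Termination measure for commuting conversions -/

def msr : Tm C → Nat
  | .cst _ => 1
  | .var _ => 1
  | .star => 1
  | .pair t u => msr t + msr u + 1
  | .proj1 t => 2 * msr t
  | .proj2 t => 2 * msr t
  | .lam t => msr t + 1
  | .app t u => msr t * (msr u + 2)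
  | .inl t => msr t + 1
  | .inr t => msr t + 1
  | .raise t => msr t + 1
  | .case s bl br => msr s * (msr bl + msr br + 1)

theorem msr_pos (t : Tm C) : 1 ≤ msr t := by
  induction t <;> simp only [msr] <;>
    first
      | omega
      | (rename_i h1 h2; exact calc 1 = 1 * 1 := rfl
          _ ≤ _ := Nat.mul_le_mul h1 (by omega))
      | (rename_i h1 h2 h3; calc 1 = 1 * 1 := rfl
          _ ≤ _ := Nat.mul_le_mul h1 (by omega))

theorem msr_rename (ρ : Nat → Nat) (t : Tm C) : msr (rename ρ t) = msr t := by
  induction t generalizing ρ <;> simp only [msr, rename, *]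

theorem mul_lt_mul_l (a b b' : Nat) (ha : 1 ≤ a) (hb : b' < b) : a * b' < a * b := by
  nlinarith

theorem mul_lt_mul_r (a a' k : Nat) (hk : 1 ≤ k) (ha : a' < a) : a' * k < a * k := by
  nlinarith

theorem ccbase_msr {t u : Tm C} (h : CCBase t u) : msr u < msr t := by
  cases h with
  | raise e t =>
    have h0 := msr_pos (Tm.raise t)
    cases e with
    | eapp u =>
      show msr (.raise t) < msr (.raise t) * (msr u + 2)
      have h2 := msr_pos u; nlinarith
    | eproj1 => show msr (.raise t) < 2 * msr (.raise t); omega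
    | eproj2 => show msr (.raise t) < 2 * msr (.raise t); omega
    | ecase bl br =>
      show msr (.raise t) < msr (.raise t) * (msr bl + msr br + 1)
      have h2 := msr_pos bl; have h3 := msr_pos br; nlinarith
  | case e s bl br =>
    have h0 := msr_pos s
    cases e with
    | eapp u =>
      show msr (.case s (.app bl (rename Nat.succ u)) (.app br (rename Nat.succ u)))
        < msr (.app (.case s bl br) u)
      simp only [msr, msr_rename]
      have h2 := msr_pos u; nlinarith
    | eproj1 =>
      show msr (.case s (.proj1 bl) (.proj1 br)) < msr (.proj1 (.case s bl br))
      simp only [msr]; nlinarith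
    | eproj2 =>
      show msr (.case s (.proj2 bl) (.proj2 br)) < msr (.proj2 (.case s bl br))
      simp only [msr]; nlinarith
    | ecase cl cr =>
      show msr (.case s (.case bl _ _) (.case br _ _)) < msr (.case (.case s bl br) cl cr)
      simp only [msr, msr_rename]
      have h2 := msr_pos cl; have h3 := msr_pos cr; nlinarith

theorem stepCC_msr {t u : Tm C} (h : StepCC t u) : msr u < msr t := by
  induction h with
  | base h => exact ccbase_msr h
  | pairL _ ih => simp only [msr]; omega
  | pairR _ ih => simp only [msr]; omega
  | proj1 _ ih => simp only [msr]; omega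
  | proj2 _ ih => simp only [msr]; omega
  | lam _ ih => simp only [msr]; omega
  | appL _ ih => simp only [msr]; exact mul_lt_mul_r _ _ _ (by omega) ih
  | appR _ ih => simp only [msr]; exact mul_lt_mul_l _ _ _ (msr_pos _) (by omega)
  | inl _ ih => simp only [msr]; omega
  | inr _ ih => simp only [msr]; omega
  | raise _ ih => simp only [msr]; omega
  | caseS _ ih =>
    simp only [msr]
    exact mul_lt_mul_r _ _ _ (by omega) ih
  | caseL _ ih => simp only [msr]; exact mul_lt_mul_l _ _ _ (msr_pos _) (by omega)
  | caseR _ ih => simp only [msr]; exact mul_lt_mul_l _ _ _ (msr_pos _) (by omega)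

/-! ### Inversion for commuting-conversion base steps -/

theorem ccbase_inv {t v : Tm C} (h : CCBase t v) :
    (∃ e s, t = plug e (.raise s) ∧ v = .raise s) ∨
    (∃ e s bl br, t = plug e (.case s bl br) ∧
      v = .case s (plug (weakenElim e) bl) (plug (weakenElim e) br)) := by
  cases h with
  | raise e s => exact Or.inl ⟨e, s, rfl, rfl⟩
  | case e s bl br => exact Or.inr ⟨e, s, bl, br, rfl, rfl⟩

theorem ccbase_app_inv {f a v : Tm C} (h : CCBase (.app f a) v) :
    (∃ s, f = .raise s ∧ v = .raise s) ∨
    (∃ s bl br, f = .case s bl br ∧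
      v = .case s (.app bl (rename Nat.succ a)) (.app br (rename Nat.succ a))) := by
  rcases ccbase_inv h with ⟨e, s, he, hv⟩ | ⟨e, s, bl, br, he, hv⟩ <;>
    cases e <;> simp_all [plug, weakenElim]

theorem ccbase_proj1_inv {f v : Tm C} (h : CCBase (.proj1 f) v) :
    (∃ s, f = .raise s ∧ v = .raise s) ∨
    (∃ s bl br, f = .case s bl br ∧ v = .case s (.proj1 bl) (.proj1 br)) := by
  rcases ccbase_inv h with ⟨e, s, he, hv⟩ | ⟨e, s, bl, br, he, hv⟩ <;>
    cases e <;> simp_all [plug, weakenElim]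

theorem ccbase_proj2_inv {f v : Tm C} (h : CCBase (.proj2 f) v) :
    (∃ s, f = .raise s ∧ v = .raise s) ∨
    (∃ s bl br, f = .case s bl br ∧ v = .case s (.proj2 bl) (.proj2 br)) := by
  rcases ccbase_inv h with ⟨e, s, he, hv⟩ | ⟨e, s, bl, br, he, hv⟩ <;>
    cases e <;> simp_all [plug, weakenElim]

theorem ccbase_case_inv {f cl cr v : Tm C} (h : CCBase (.case f cl cr) v) :
    (∃ s, f = .raise s ∧ v = .raise s) ∨
    (∃ s bl br, f = .case s bl br ∧
      v = .case s (.case bl (rename (liftRen Nat.succ) cl) (rename (liftRen Nat.succ) cr))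
            (.case br (rename (liftRen Nat.succ) cl) (rename (liftRen Nat.succ) cr))) := by
  rcases ccbase_inv h with ⟨e, s, he, hv⟩ | ⟨e, s, bl, br, he, hv⟩ <;>
    cases e <;> simp_all [plug, weakenElim]

theorem ccbase_pair_inv {a b v : Tm C} (h : CCBase (.pair a b) v) : False := by
  rcases ccbase_inv h with ⟨e, s, he, hv⟩ | ⟨e, s, bl, br, he, hv⟩ <;>
    cases e <;> simp_all [plug, weakenElim]

theorem ccbase_lam_inv {a v : Tm C} (h : CCBase (.lam a) v) : False := by
  rcases ccbase_inv h with ⟨e, s, he, hv⟩ | ⟨e, s, bl, br, he, hv⟩ <;>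
    cases e <;> simp_all [plug, weakenElim]

theorem ccbase_inl_inv {a v : Tm C} (h : CCBase (.inl a) v) : False := by
  rcases ccbase_inv h with ⟨e, s, he, hv⟩ | ⟨e, s, bl, br, he, hv⟩ <;>
    cases e <;> simp_all [plug, weakenElim]

theorem ccbase_inr_inv {a v : Tm C} (h : CCBase (.inr a) v) : False := by
  rcases ccbase_inv h with ⟨e, s, he, hv⟩ | ⟨e, s, bl, br, he, hv⟩ <;>
    cases e <;> simp_all [plug, weakenElim]

theorem ccbase_raise_inv {a v : Tm C} (h : CCBase (.raise a) v) : False := by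
  rcases ccbase_inv h with ⟨e, s, he, hv⟩ | ⟨e, s, bl, br, he, hv⟩ <;>
    cases e <;> simp_all [plug, weakenElim]

/-- The four commuting conversions as single steps, stated concretely. -/
theorem cc_app_raise (s a : Tm C) : StepCC (.app (.raise s) a) (.raise s) :=
  .base (CCBase.raise (.eapp a) s)

theorem cc_proj1_raise (s : Tm C) : StepCC (.proj1 (.raise s)) (.raise s) :=
  .base (CCBase.raise .eproj1 s)

theorem cc_proj2_raise (s : Tm C) : StepCC (.proj2 (.raise s)) (.raise s) :=
  .base (CCBase.raise .eproj2 s)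

theorem cc_case_raise (s cl cr : Tm C) : StepCC (.case (.raise s) cl cr) (.raise s) :=
  .base (CCBase.raise (.ecase cl cr) s)

theorem cc_app_case (s bl br a : Tm C) :
    StepCC (.app (.case s bl br) a)
      (.case s (.app bl (rename Nat.succ a)) (.app br (rename Nat.succ a))) :=
  .base (CCBase.case (.eapp a) s bl br)

theorem cc_proj1_case (s bl br : Tm C) :
    StepCC (.proj1 (.case s bl br)) (.case s (.proj1 bl) (.proj1 br)) :=
  .base (CCBase.case .eproj1 s bl br)

theorem cc_proj2_case (s bl br : Tm C) :
    StepCC (.proj2 (.case s bl br)) (.case s (.proj2 bl) (.proj2 br)) :=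
  .base (CCBase.case .eproj2 s bl br)

theorem cc_case_case (s bl br cl cr : Tm C) :
    StepCC (.case (.case s bl br) cl cr)
      (.case s (.case bl (rename (liftRen Nat.succ) cl) (rename (liftRen Nat.succ) cr))
        (.case br (rename (liftRen Nat.succ) cl) (rename (liftRen Nat.succ) cr))) :=
  .base (CCBase.case (.ecase cl cr) s bl br)

/-! ### Local confluence of commuting conversions -/

theorem liftRen_succ_succ :
    (liftRen Nat.succ) ∘ Nat.succ = Nat.succ ∘ Nat.succ := by
  funext n; rfl

theorem cc_base_join {t u v : Tm C} (h : CCBase t u) (h2 : StepCC t v) :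
    ∃ w, RedsCC u w ∧ RedsCC v w := by
  rcases ccbase_inv h with ⟨e, s, rfl, rfl⟩ | ⟨e, s, bl, br, rfl, rfl⟩
  · -- raise rule
    cases e with
    | eapp a =>
      cases h2 with
      | base h2 =>
        rcases ccbase_app_inv h2 with ⟨s', hs, rfl⟩ | ⟨s', bl', br', hs, rfl⟩
        · cases hs; exact ⟨_, .refl, .refl⟩
        · cases hs
      | appL h2 =>
        cases h2 with
        | base h2 => exact absurd h2 ccbase_raise_inv
        | raise h2 => exact ⟨_, .single (.raise h2), .single (cc_app_raise _ _)⟩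
      | appR h2 => exact ⟨_, .refl, .single (cc_app_raise _ _)⟩
    | eproj1 =>
      cases h2 with
      | base h2 =>
        rcases ccbase_proj1_inv h2 with ⟨s', hs, rfl⟩ | ⟨s', bl', br', hs, rfl⟩
        · cases hs; exact ⟨_, .refl, .refl⟩
        · cases hs
      | proj1 h2 =>
        cases h2 with
        | base h2 => exact absurd h2 ccbase_raise_inv
        | raise h2 => exact ⟨_, .single (.raise h2), .single (cc_proj1_raise _)⟩
    | eproj2 =>
      cases h2 with
      | base h2 =>
        rcases ccbase_proj2_inv h2 with ⟨s', hs, rfl⟩ | ⟨s', bl', br', hs, rfl⟩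
        · cases hs; exact ⟨_, .refl, .refl⟩
        · cases hs
      | proj2 h2 =>
        cases h2 with
        | base h2 => exact absurd h2 ccbase_raise_inv
        | raise h2 => exact ⟨_, .single (.raise h2), .single (cc_proj2_raise _)⟩
    | ecase cl cr =>
      cases h2 with
      | base h2 =>
        rcases ccbase_case_inv h2 with ⟨s', hs, rfl⟩ | ⟨s', bl', br', hs, rfl⟩
        · cases hs; exact ⟨_, .refl, .refl⟩
        · cases hs
      | caseS h2 =>
        cases h2 with
        | base h2 => exact absurd h2 ccbase_raise_inv
        | raise h2 => exact ⟨_, .single (.raise h2), .single (cc_case_raise _ _ _)⟩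
      | caseL h2 => exact ⟨_, .refl, .single (cc_case_raise _ _ _)⟩
      | caseR h2 => exact ⟨_, .refl, .single (cc_case_raise _ _ _)⟩
  · -- case rule
    cases e with
    | eapp a =>
      cases h2 with
      | base h2 =>
        rcases ccbase_app_inv h2 with ⟨s', hs, rfl⟩ | ⟨s', bl', br', hs, rfl⟩
        · cases hs
        · cases hs; exact ⟨_, .refl, .refl⟩
      | appL h2 =>
        cases h2 with
        | base h2 =>
          rcases ccbase_case_inv h2 with ⟨r, rfl, rfl⟩ | ⟨q, dl, dr, rfl, rfl⟩
          · -- s = raise r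
            exact ⟨.raise r, .single (cc_case_raise _ _ _), .single (cc_app_raise _ _)⟩
          · -- s = case q dl dr
            refine ⟨.case q
              (.case dl (.app (rename (liftRen Nat.succ) bl)
                  (rename Nat.succ (rename Nat.succ a)))
                (.app (rename (liftRen Nat.succ) br)
                  (rename Nat.succ (rename Nat.succ a))))
              (.case dr (.app (rename (liftRen Nat.succ) bl)
                  (rename Nat.succ (rename Nat.succ a)))
                (.app (rename (liftRen Nat.succ) br)
                  (rename Nat.succ (rename Nat.succ a)))), ?_, ?_⟩
            · -- from u = case (case q dl dr) (app bl ↑a) (app br ↑a)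
              refine .single ?_
              have := cc_case_case q dl dr (.app bl (rename Nat.succ a))
                (.app br (rename Nat.succ a))
              simpa [rename, rename_rename, liftRen_succ_succ, plug, weakenElim] using this
            · -- from v = app (case q (case dl ŵbl ŵbr) (case dr ŵbl ŵbr)) a
              refine .head (cc_app_case _ _ _ _) ?_
              refine .head (Cong.caseL (cc_app_case _ _ _ _)) ?_
              exact .single (Cong.caseR (cc_app_case _ _ _ _))
        | caseS h2 => exact ⟨_, .single (.caseS h2), .single (cc_app_case _ _ _ _)⟩
        | caseL h2 =>
          exact ⟨_, .single (.caseL (.appL h2)), .single (cc_app_case _ _ _ _)⟩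
        | caseR h2 =>
          exact ⟨_, .single (.caseR (.appL h2)), .single (cc_app_case _ _ _ _)⟩
      | appR h2 =>
        refine ⟨_, ?_, .single (cc_app_case _ _ _ _)⟩
        exact .head (Cong.caseL (.appR (stepCC_rename h2 Nat.succ)))
          (.single (Cong.caseR (.appR (stepCC_rename h2 Nat.succ))))
    | eproj1 =>
      cases h2 with
      | base h2 =>
        rcases ccbase_proj1_inv h2 with ⟨s', hs, rfl⟩ | ⟨s', bl', br', hs, rfl⟩
        · cases hs
        · cases hs; exact ⟨_, .refl, .refl⟩
      | proj1 h2 =>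
        cases h2 with
        | base h2 =>
          rcases ccbase_case_inv h2 with ⟨r, rfl, rfl⟩ | ⟨q, dl, dr, rfl, rfl⟩
          · exact ⟨.raise r, .single (cc_case_raise _ _ _), .single (cc_proj1_raise _)⟩
          · refine ⟨.case q
              (.case dl (.proj1 (rename (liftRen Nat.succ) bl))
                (.proj1 (rename (liftRen Nat.succ) br)))
              (.case dr (.proj1 (rename (liftRen Nat.succ) bl))
                (.proj1 (rename (liftRen Nat.succ) br))), ?_, ?_⟩
            · refine .single ?_
              have := cc_case_case q dl dr (Tm.proj1 bl) (Tm.proj1 br)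
              simpa [rename, plug, weakenElim] using this
            · refine .head (cc_proj1_case _ _ _) ?_
              refine .head (Cong.caseL (cc_proj1_case _ _ _)) ?_
              exact .single (Cong.caseR (cc_proj1_case _ _ _))
        | caseS h2 => exact ⟨_, .single (.caseS h2), .single (cc_proj1_case _ _ _)⟩
        | caseL h2 =>
          exact ⟨_, .single (.caseL (.proj1 h2)), .single (cc_proj1_case _ _ _)⟩
        | caseR h2 =>
          exact ⟨_, .single (.caseR (.proj1 h2)), .single (cc_proj1_case _ _ _)⟩
    | eproj2 =>
      cases h2 with
      | base h2 =>
        rcases ccbase_proj2_inv h2 with ⟨s', hs, rfl⟩ | ⟨s', bl', br', hs, rfl⟩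
        · cases hs
        · cases hs; exact ⟨_, .refl, .refl⟩
      | proj2 h2 =>
        cases h2 with
        | base h2 =>
          rcases ccbase_case_inv h2 with ⟨r, rfl, rfl⟩ | ⟨q, dl, dr, rfl, rfl⟩
          · exact ⟨.raise r, .single (cc_case_raise _ _ _), .single (cc_proj2_raise _)⟩
          · refine ⟨.case q
              (.case dl (.proj2 (rename (liftRen Nat.succ) bl))
                (.proj2 (rename (liftRen Nat.succ) br)))
              (.case dr (.proj2 (rename (liftRen Nat.succ) bl))
                (.proj2 (rename (liftRen Nat.succ) br))), ?_, ?_⟩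
            · refine .single ?_
              have := cc_case_case q dl dr (Tm.proj2 bl) (Tm.proj2 br)
              simpa [rename, plug, weakenElim] using this
            · refine .head (cc_proj2_case _ _ _) ?_
              refine .head (Cong.caseL (cc_proj2_case _ _ _)) ?_
              exact .single (Cong.caseR (cc_proj2_case _ _ _))
        | caseS h2 => exact ⟨_, .single (.caseS h2), .single (cc_proj2_case _ _ _)⟩
        | caseL h2 =>
          exact ⟨_, .single (.caseL (.proj2 h2)), .single (cc_proj2_case _ _ _)⟩
        | caseR h2 =>
          exact ⟨_, .single (.caseR (.proj2 h2)), .single (cc_proj2_case _ _ _)⟩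
    | ecase cl cr =>
      cases h2 with
      | base h2 =>
        rcases ccbase_case_inv h2 with ⟨s', hs, rfl⟩ | ⟨s', bl', br', hs, rfl⟩
        · cases hs
        · cases hs; exact ⟨_, .refl, .refl⟩
      | caseS h2 =>
        cases h2 with
        | base h2 =>
          rcases ccbase_case_inv h2 with ⟨r, rfl, rfl⟩ | ⟨q, dl, dr, rfl, rfl⟩
          · exact ⟨.raise r, .single (cc_case_raise _ _ _), .single (cc_case_raise _ _ _)⟩
          · refine ⟨.case q
              (.case dl (.case (rename (liftRen Nat.succ) bl)
                  (rename (liftRen (liftRen Nat.succ)) (rename (liftRen Nat.succ) cl))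
                  (rename (liftRen (liftRen Nat.succ)) (rename (liftRen Nat.succ) cr)))
                (.case (rename (liftRen Nat.succ) br)
                  (rename (liftRen (liftRen Nat.succ)) (rename (liftRen Nat.succ) cl))
                  (rename (liftRen (liftRen Nat.succ)) (rename (liftRen Nat.succ) cr))))
              (.case dr (.case (rename (liftRen Nat.succ) bl)
                  (rename (liftRen (liftRen Nat.succ)) (rename (liftRen Nat.succ) cl))
                  (rename (liftRen (liftRen Nat.succ)) (rename (liftRen Nat.succ) cr)))
                (.case (rename (liftRen Nat.succ) br)
                  (rename (liftRen (liftRen Nat.succ)) (rename (liftRen Nat.succ) cl))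
                  (rename (liftRen (liftRen Nat.succ)) (rename (liftRen Nat.succ) cr)))),
              ?_, ?_⟩
            · -- u = case (case q dl dr) (case bl ŵcl ŵcr) (case br ŵcl ŵcr) : one root step
              refine .single ?_
              have := cc_case_case q dl dr
                (.case bl (rename (liftRen Nat.succ) cl) (rename (liftRen Nat.succ) cr))
                (.case br (rename (liftRen Nat.succ) cl) (rename (liftRen Nat.succ) cr))
              simpa [rename, plug, weakenElim] using this
            · -- v = case (case q (case dl ŵbl ŵbr) (case dr ŵbl ŵbr)) cl cr : three steps
              refine .head (cc_case_case _ _ _ _ _) ?_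
              refine .head (Cong.caseL ?_) (.single (Cong.caseR ?_))
              · have := cc_case_case (C := C) dl (rename (liftRen Nat.succ) bl)
                  (rename (liftRen Nat.succ) br) (rename (liftRen Nat.succ) cl)
                  (rename (liftRen Nat.succ) cr)
                simpa [rename_rename, liftRen_comp, liftRen_succ_comm, StepCC] using this
              · have := cc_case_case (C := C) dr (rename (liftRen Nat.succ) bl)
                  (rename (liftRen Nat.succ) br) (rename (liftRen Nat.succ) cl)
                  (rename (liftRen Nat.succ) cr)
                simpa [rename_rename, liftRen_comp, liftRen_succ_comm, StepCC] using this
        | caseS h2 => exact ⟨_, .single (.caseS h2), .single (cc_case_case _ _ _ _ _)⟩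
        | caseL h2 =>
          exact ⟨_, .single (.caseL (.caseS h2)), .single (cc_case_case _ _ _ _ _)⟩
        | caseR h2 =>
          exact ⟨_, .single (.caseR (.caseS h2)), .single (cc_case_case _ _ _ _ _)⟩
      | caseL h2 =>
        refine ⟨_, ?_, .single (cc_case_case _ _ _ _ _)⟩
        exact .head (Cong.caseL (.caseL (stepCC_rename h2 (liftRen Nat.succ))))
          (.single (Cong.caseR (.caseL (stepCC_rename h2 (liftRen Nat.succ)))))
      | caseR h2 =>
        refine ⟨_, ?_, .single (cc_case_case _ _ _ _ _)⟩
        exact .head (Cong.caseL (.caseR (stepCC_rename h2 (liftRen Nat.succ))))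
          (.single (Cong.caseR (.caseR (stepCC_rename h2 (liftRen Nat.succ)))))

theorem stepCC_local_confluent {t u v : Tm C} (h1 : StepCC t u) (h2 : StepCC t v) :
    ∃ w, RedsCC u w ∧ RedsCC v w := by
  induction h1 generalizing v with
  | base h1 => exact cc_base_join h1 h2
  | pairL h1 ih =>
    cases h2 with
    | base h2 => exact absurd h2 ccbase_pair_inv
    | pairL h2 =>
      obtain ⟨w, hw1, hw2⟩ := ih h2
      exact ⟨_, redsCong (fun h => Cong.pairL h) hw1, redsCong (fun h => Cong.pairL h) hw2⟩
    | pairR h2 => exact ⟨_, .single (.pairR h2), .single (.pairL h1)⟩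
  | pairR h1 ih =>
    cases h2 with
    | base h2 => exact absurd h2 ccbase_pair_inv
    | pairL h2 => exact ⟨_, .single (.pairL h2), .single (.pairR h1)⟩
    | pairR h2 =>
      obtain ⟨w, hw1, hw2⟩ := ih h2
      exact ⟨_, redsCong (fun h => Cong.pairR h) hw1, redsCong (fun h => Cong.pairR h) hw2⟩
  | proj1 h1 ih =>
    cases h2 with
    | base h2 =>
      obtain ⟨w, hw2, hw1⟩ := cc_base_join h2 (.proj1 h1)
      exact ⟨w, hw1, hw2⟩
    | proj1 h2 =>
      obtain ⟨w, hw1, hw2⟩ := ih h2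
      exact ⟨_, redsCong (fun h => Cong.proj1 h) hw1, redsCong (fun h => Cong.proj1 h) hw2⟩
  | proj2 h1 ih =>
    cases h2 with
    | base h2 =>
      obtain ⟨w, hw2, hw1⟩ := cc_base_join h2 (.proj2 h1)
      exact ⟨w, hw1, hw2⟩
    | proj2 h2 =>
      obtain ⟨w, hw1, hw2⟩ := ih h2
      exact ⟨_, redsCong (fun h => Cong.proj2 h) hw1, redsCong (fun h => Cong.proj2 h) hw2⟩
  | lam h1 ih =>
    cases h2 with
    | base h2 => exact absurd h2 ccbase_lam_inv
    | lam h2 =>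
      obtain ⟨w, hw1, hw2⟩ := ih h2
      exact ⟨_, redsCong (fun h => Cong.lam h) hw1, redsCong (fun h => Cong.lam h) hw2⟩
  | appL h1 ih =>
    cases h2 with
    | base h2 =>
      obtain ⟨w, hw2, hw1⟩ := cc_base_join h2 (.appL h1)
      exact ⟨w, hw1, hw2⟩
    | appL h2 =>
      obtain ⟨w, hw1, hw2⟩ := ih h2
      exact ⟨_, redsCong (fun h => Cong.appL h) hw1, redsCong (fun h => Cong.appL h) hw2⟩
    | appR h2 => exact ⟨_, .single (.appR h2), .single (.appL h1)⟩
  | appR h1 ih =>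
    cases h2 with
    | base h2 =>
      obtain ⟨w, hw2, hw1⟩ := cc_base_join h2 (.appR h1)
      exact ⟨w, hw1, hw2⟩
    | appL h2 => exact ⟨_, .single (.appL h2), .single (.appR h1)⟩
    | appR h2 =>
      obtain ⟨w, hw1, hw2⟩ := ih h2
      exact ⟨_, redsCong (fun h => Cong.appR h) hw1, redsCong (fun h => Cong.appR h) hw2⟩
  | inl h1 ih =>
    cases h2 with
    | base h2 => exact absurd h2 ccbase_inl_inv
    | inl h2 =>
      obtain ⟨w, hw1, hw2⟩ := ih h2
      exact ⟨_, redsCong (fun h => Cong.inl h) hw1, redsCong (fun h => Cong.inl h) hw2⟩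
  | inr h1 ih =>
    cases h2 with
    | base h2 => exact absurd h2 ccbase_inr_inv
    | inr h2 =>
      obtain ⟨w, hw1, hw2⟩ := ih h2
      exact ⟨_, redsCong (fun h => Cong.inr h) hw1, redsCong (fun h => Cong.inr h) hw2⟩
  | raise h1 ih =>
    cases h2 with
    | base h2 => exact absurd h2 ccbase_raise_inv
    | raise h2 =>
      obtain ⟨w, hw1, hw2⟩ := ih h2
      exact ⟨_, redsCong (fun h => Cong.raise h) hw1, redsCong (fun h => Cong.raise h) hw2⟩
  | caseS h1 ih =>
    cases h2 with
    | base h2 =>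
      obtain ⟨w, hw2, hw1⟩ := cc_base_join h2 (.caseS h1)
      exact ⟨w, hw1, hw2⟩
    | caseS h2 =>
      obtain ⟨w, hw1, hw2⟩ := ih h2
      exact ⟨_, redsCong (fun h => Cong.caseS h) hw1, redsCong (fun h => Cong.caseS h) hw2⟩
    | caseL h2 => exact ⟨_, .single (.caseL h2), .single (.caseS h1)⟩
    | caseR h2 => exact ⟨_, .single (.caseR h2), .single (.caseS h1)⟩
  | caseL h1 ih =>
    cases h2 with
    | base h2 =>
      obtain ⟨w, hw2, hw1⟩ := cc_base_join h2 (.caseL h1)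
      exact ⟨w, hw1, hw2⟩
    | caseS h2 => exact ⟨_, .single (.caseS h2), .single (.caseL h1)⟩
    | caseL h2 =>
      obtain ⟨w, hw1, hw2⟩ := ih h2
      exact ⟨_, redsCong (fun h => Cong.caseL h) hw1, redsCong (fun h => Cong.caseL h) hw2⟩
    | caseR h2 => exact ⟨_, .single (.caseR h2), .single (.caseL h1)⟩
  | caseR h1 ih =>
    cases h2 with
    | base h2 =>
      obtain ⟨w, hw2, hw1⟩ := cc_base_join h2 (.caseR h1)
      exact ⟨w, hw1, hw2⟩
    | caseS h2 => exact ⟨_, .single (.caseS h2), .single (.caseR h1)⟩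
    | caseL h2 => exact ⟨_, .single (.caseL h2), .single (.caseR h1)⟩
    | caseR h2 =>
      obtain ⟨w, hw1, hw2⟩ := ih h2
      exact ⟨_, redsCong (fun h => Cong.caseR h) hw1, redsCong (fun h => Cong.caseR h) hw2⟩

/-- Newman's lemma instance: cc-reduction is confluent (using the measure). -/
theorem redsCC_confluent {t u v : Tm C} (h1 : RedsCC t u) (h2 : RedsCC t v) :
    ∃ w, RedsCC u w ∧ RedsCC v w := by
  have main : ∀ n (t u v : Tm C), msr t ≤ n → RedsCC t u → RedsCC t v →
      ∃ w, RedsCC u w ∧ RedsCC v w := by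
    intro n
    induction n with
    | zero => intro t _ _ hle; exact absurd (Nat.lt_of_lt_of_le (msr_pos t) hle) (by omega)
    | succ n ih =>
      intro t u v hle h1 h2
      rcases h1.cases_head with rfl | ⟨a, ha, hau⟩
      · exact ⟨v, h2, .refl⟩
      rcases h2.cases_head with rfl | ⟨b, hb, hbv⟩
      · exact ⟨u, .refl, h1⟩
      obtain ⟨c, hac, hbc⟩ := stepCC_local_confluent ha hb
      have hma : msr a ≤ n := by have := stepCC_msr ha; omega
      have hmb : msr b ≤ n := by have := stepCC_msr hb; omega
      obtain ⟨d, hud, hcd⟩ := ih a u c hma hau hac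
      obtain ⟨e, hve, hde⟩ := ih b v d hmb hbv (hbc.trans hcd)
      exact ⟨e, hud.trans hde, hve⟩
  exact main (msr t) t u v (Nat.le_refl _) h1 h2

/-! ### Commutation of parallel β-reduction with commuting conversions -/

theorem pb_cc_comm {t tb tc : Tm C} (hb : PB t tb) (hc : StepCC t tc) :
    ∃ w, PB tc w ∧ RedsCC tb w := by
  induction hb generalizing tc with
  | cst =>
    cases hc with
    | base h => exact absurd h (by intro h; rcases ccbase_inv h with ⟨e,s,he,_⟩|⟨e,s,bl,br,he,_⟩ <;> cases e <;> simp [plug] at he)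
  | var =>
    cases hc with
    | base h => exact absurd h (by intro h; rcases ccbase_inv h with ⟨e,s,he,_⟩|⟨e,s,bl,br,he,_⟩ <;> cases e <;> simp [plug] at he)
  | star =>
    cases hc with
    | base h => exact absurd h (by intro h; rcases ccbase_inv h with ⟨e,s,he,_⟩|⟨e,s,bl,br,he,_⟩ <;> cases e <;> simp [plug] at he)
  | pair h1 h2 ih1 ih2 =>
    cases hc with
    | base h => exact absurd h ccbase_pair_inv
    | pairL hc =>
      obtain ⟨w, hw1, hw2⟩ := ih1 hc
      exact ⟨_, .pair hw1 h2, redsCong (fun h => Cong.pairL h) hw2⟩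
    | pairR hc =>
      obtain ⟨w, hw1, hw2⟩ := ih2 hc
      exact ⟨_, .pair h1 hw1, redsCong (fun h => Cong.pairR h) hw2⟩
  | proj1 h1 ih1 =>
    cases hc with
    | base hc =>
      rcases ccbase_proj1_inv hc with ⟨s, rfl, rfl⟩ | ⟨s, bl, br, rfl, rfl⟩
      · -- argument is raise s
        obtain ⟨s', rfl, hs⟩ := h1.raise_inv
        exact ⟨.raise s', .raise hs, .single (cc_proj1_raise _)⟩
      · -- argument is case s bl br
        cases h1 with
        | case hs hbl hbr =>
          exact ⟨_, .case hs (.proj1 hbl) (.proj1 hbr), .single (cc_proj1_case _ _ _)⟩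
        | beta_inl ha hbl =>
          refine ⟨_, PB.beta_inl (br := Tm.proj1 br) ha (.proj1 hbl), ?_⟩
          exact .refl
        | beta_inr ha hbr =>
          refine ⟨_, PB.beta_inr (bl := Tm.proj1 bl) ha (.proj1 hbr), ?_⟩
          exact .refl
    | proj1 hc =>
      obtain ⟨w, hw1, hw2⟩ := ih1 hc
      exact ⟨_, .proj1 hw1, redsCong (fun h => Cong.proj1 h) hw2⟩
  | proj2 h1 ih1 =>
    cases hc with
    | base hc =>
      rcases ccbase_proj2_inv hc with ⟨s, rfl, rfl⟩ | ⟨s, bl, br, rfl, rfl⟩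
      · obtain ⟨s', rfl, hs⟩ := h1.raise_inv
        exact ⟨.raise s', .raise hs, .single (cc_proj2_raise _)⟩
      · cases h1 with
        | case hs hbl hbr =>
          exact ⟨_, .case hs (.proj2 hbl) (.proj2 hbr), .single (cc_proj2_case _ _ _)⟩
        | beta_inl ha hbl =>
          exact ⟨_, PB.beta_inl (br := Tm.proj2 br) ha (.proj2 hbl), .refl⟩
        | beta_inr ha hbr =>
          exact ⟨_, PB.beta_inr (bl := Tm.proj2 bl) ha (.proj2 hbr), .refl⟩
    | proj2 hc =>
      obtain ⟨w, hw1, hw2⟩ := ih1 hc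
      exact ⟨_, .proj2 hw1, redsCong (fun h => Cong.proj2 h) hw2⟩
  | lam h1 ih1 =>
    cases hc with
    | base h => exact absurd h ccbase_lam_inv
    | lam hc =>
      obtain ⟨w, hw1, hw2⟩ := ih1 hc
      exact ⟨_, .lam hw1, redsCong (fun h => Cong.lam h) hw2⟩
  | app hf ha ihf iha =>
    rename_i f f' a1 a1'
    cases hc with
    | base hc =>
      rcases ccbase_app_inv hc with ⟨s, rfl, rfl⟩ | ⟨s, bl, br, rfl, rfl⟩
      · obtain ⟨s', rfl, hs⟩ := hf.raise_inv
        exact ⟨.raise s', .raise hs, .single (cc_app_raise _ _)⟩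
      · cases hf with
        | case hs hbl hbr =>
          refine ⟨_, .case hs (.app hbl (ha.rename Nat.succ)) (.app hbr (ha.rename Nat.succ)),
            .single (cc_app_case _ _ _ _)⟩
        | beta_inl hp hbl =>
          refine ⟨_, ?_, .refl⟩
          have := PB.beta_inl (br := Tm.app br (rename Nat.succ a1))
            hp (PB.app hbl (ha.rename Nat.succ))
          simpa [STLCp.subst, subst_sub0_rename] using this
        | beta_inr hp hbr =>
          refine ⟨_, ?_, .refl⟩
          have := PB.beta_inr (bl := Tm.app bl (rename Nat.succ a1))
            hp (PB.app hbr (ha.rename Nat.succ))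
          simpa [STLCp.subst, subst_sub0_rename] using this
    | appL hc =>
      obtain ⟨w, hw1, hw2⟩ := ihf hc
      exact ⟨_, .app hw1 ha, redsCong (fun h => Cong.appL h) hw2⟩
    | appR hc =>
      obtain ⟨w, hw1, hw2⟩ := iha hc
      exact ⟨_, .app hf hw1, redsCong (fun h => Cong.appR h) hw2⟩
  | inl h1 ih1 =>
    cases hc with
    | base h => exact absurd h ccbase_inl_inv
    | inl hc =>
      obtain ⟨w, hw1, hw2⟩ := ih1 hc
      exact ⟨_, .inl hw1, redsCong (fun h => Cong.inl h) hw2⟩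
  | inr h1 ih1 =>
    cases hc with
    | base h => exact absurd h ccbase_inr_inv
    | inr hc =>
      obtain ⟨w, hw1, hw2⟩ := ih1 hc
      exact ⟨_, .inr hw1, redsCong (fun h => Cong.inr h) hw2⟩
  | raise h1 ih1 =>
    cases hc with
    | base h => exact absurd h ccbase_raise_inv
    | raise hc =>
      obtain ⟨w, hw1, hw2⟩ := ih1 hc
      exact ⟨_, .raise hw1, redsCong (fun h => Cong.raise h) hw2⟩
  | case hs hbl hbr ihs ihbl ihbr =>
    rename_i s0 s0' cl0 cl0' cr0 cr0'
    cases hc with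
    | base hc =>
      rcases ccbase_case_inv hc with ⟨r, rfl, rfl⟩ | ⟨q, dl, dr, rfl, rfl⟩
      · obtain ⟨r', rfl, hr⟩ := hs.raise_inv
        exact ⟨.raise r', .raise hr, .single (cc_case_raise _ _ _)⟩
      · cases hs with
        | case hq hdl hdr =>
          refine ⟨_, .case hq
            (.case hdl (hbl.rename (liftRen Nat.succ)) (hbr.rename (liftRen Nat.succ)))
            (.case hdr (hbl.rename (liftRen Nat.succ)) (hbr.rename (liftRen Nat.succ))),
            .single (cc_case_case _ _ _ _ _)⟩
        | beta_inl hp hdl =>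
          refine ⟨_, ?_, .refl⟩
          have := PB.beta_inl (br := Tm.case dr (rename (liftRen Nat.succ) cl0)
              (rename (liftRen Nat.succ) cr0))
            hp (PB.case hdl (hbl.rename (liftRen Nat.succ)) (hbr.rename (liftRen Nat.succ)))
          simpa [STLCp.subst, subst_lift_sub0_rename] using this
        | beta_inr hp hdr =>
          refine ⟨_, ?_, .refl⟩
          have := PB.beta_inr (bl := Tm.case dl (rename (liftRen Nat.succ) cl0)
              (rename (liftRen Nat.succ) cr0))
            hp (PB.case hdr (hbl.rename (liftRen Nat.succ)) (hbr.rename (liftRen Nat.succ)))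
          simpa [STLCp.subst, subst_lift_sub0_rename] using this
    | caseS hc =>
      obtain ⟨w, hw1, hw2⟩ := ihs hc
      exact ⟨_, .case hw1 hbl hbr, redsCong (fun h => Cong.caseS h) hw2⟩
    | caseL hc =>
      obtain ⟨w, hw1, hw2⟩ := ihbl hc
      exact ⟨_, .case hs hw1 hbr, redsCong (fun h => Cong.caseL h) hw2⟩
    | caseR hc =>
      obtain ⟨w, hw1, hw2⟩ := ihbr hc
      exact ⟨_, .case hs hbl hw1, redsCong (fun h => Cong.caseR h) hw2⟩
  | beta_proj1 hx hy ihx ihy =>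
    cases hc with
    | base h => exact absurd h (by
        intro h
        rcases ccbase_proj1_inv h with ⟨s, hs, _⟩ | ⟨s, bl, br, hs, _⟩ <;> cases hs)
    | proj1 hc =>
      cases hc with
      | base h => exact absurd h ccbase_pair_inv
      | pairL hc =>
        obtain ⟨w, hw1, hw2⟩ := ihx hc
        exact ⟨w, .beta_proj1 hw1 (PB.refl _), hw2⟩
      | pairR hc => exact ⟨_, .beta_proj1 hx (PB.refl _), .refl⟩
  | beta_proj2 hx hy ihx ihy =>
    cases hc with
    | base h => exact absurd h (by
        intro h
        rcases ccbase_proj2_inv h with ⟨s, hs, _⟩ | ⟨s, bl, br, hs, _⟩ <;> cases hs)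
    | proj2 hc =>
      cases hc with
      | base h => exact absurd h ccbase_pair_inv
      | pairL hc => exact ⟨_, .beta_proj2 (PB.refl _) hy, .refl⟩
      | pairR hc =>
        obtain ⟨w, hw1, hw2⟩ := ihy hc
        exact ⟨w, .beta_proj2 (PB.refl _) hw1, hw2⟩
  | beta_app hb ha ihb iha =>
    cases hc with
    | base h => exact absurd h (by
        intro h
        rcases ccbase_app_inv h with ⟨s, hs, _⟩ | ⟨s, bl, br, hs, _⟩ <;> cases hs)
    | appL hc =>
      cases hc with
      | base h => exact absurd h ccbase_lam_inv
      | lam hc =>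
        obtain ⟨w, hw1, hw2⟩ := ihb hc
        refine ⟨STLCp.subst (sub0 _) w, .beta_app hw1 ha, ?_⟩
        exact redsCC_subst_left hw2 _
    | appR hc =>
      obtain ⟨w, hw1, hw2⟩ := iha hc
      refine ⟨STLCp.subst (sub0 w) _, .beta_app hb hw1, ?_⟩
      exact redsCC_sub0 hw2 _
  | beta_inl ha hl iha ihl =>
    cases hc with
    | base h => exact absurd h (by
        intro h
        rcases ccbase_case_inv h with ⟨s, hs, _⟩ | ⟨s, bl, br, hs, _⟩ <;> cases hs)
    | caseS hc =>
      cases hc with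
      | base h => exact absurd h ccbase_inl_inv
      | inl hc =>
        obtain ⟨w, hw1, hw2⟩ := iha hc
        refine ⟨STLCp.subst (sub0 w) _, .beta_inl hw1 hl, ?_⟩
        exact redsCC_sub0 hw2 _
    | caseL hc =>
      obtain ⟨w, hw1, hw2⟩ := ihl hc
      refine ⟨STLCp.subst (sub0 _) w, .beta_inl ha hw1, ?_⟩
      exact redsCC_subst_left hw2 _
    | caseR hc => exact ⟨_, .beta_inl ha hl, .refl⟩
  | beta_inr ha hr iha ihr =>
    cases hc with
    | base h => exact absurd h (by
        intro h
        rcases ccbase_case_inv h with ⟨s, hs, _⟩ | ⟨s, bl, br, hs, _⟩ <;> cases hs)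
    | caseS hc =>
      cases hc with
      | base h => exact absurd h ccbase_inr_inv
      | inr hc =>
        obtain ⟨w, hw1, hw2⟩ := iha hc
        refine ⟨STLCp.subst (sub0 w) _, .beta_inr hw1 hr, ?_⟩
        exact redsCC_sub0 hw2 _
    | caseL hc => exact ⟨_, .beta_inr ha hr, .refl⟩
    | caseR hc =>
      obtain ⟨w, hw1, hw2⟩ := ihr hc
      refine ⟨STLCp.subst (sub0 _) w, .beta_inr ha hw1, ?_⟩
      exact redsCC_subst_left hw2 _

theorem pb_redsCC_comm {t tb tc : Tm C} (hc : RedsCC t tc) (hb : PB t tb) :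
    ∃ w, PB tc w ∧ RedsCC tb w := by
  induction hc using Relation.ReflTransGen.head_induction_on generalizing tb with
  | refl => exact ⟨tb, hb, .refl⟩
  | head hstep _ ih =>
    obtain ⟨w1, hw1, hw2⟩ := pb_cc_comm hb hstep
    obtain ⟨w, hw3, hw4⟩ := ih hw1
    exact ⟨w, hw3, hw2.trans hw4⟩

theorem beta_cc_comm {t tb tc : Tm C} (hb : RedsBeta t tb) (hc : RedsCC t tc) :
    ∃ w, RedsBeta tc w ∧ RedsCC tb w := by
  rw [← rtg_pb_iff] at hb
  have main : ∀ {t tb tc : Tm C}, Relation.ReflTransGen PB t tb → RedsCC t tc →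
      ∃ w, Relation.ReflTransGen PB tc w ∧ RedsCC tb w := by
    intro t tb tc hb hc
    induction hb using Relation.ReflTransGen.head_induction_on generalizing tc with
    | refl => exact ⟨tc, .refl, hc⟩
    | head hstep _ ih =>
      obtain ⟨w1, hw1, hw2⟩ := pb_redsCC_comm hc hstep
      obtain ⟨w, hw3, hw4⟩ := ih hw2
      exact ⟨w, .head hw1 hw3, hw4⟩
  obtain ⟨w, hw1, hw2⟩ := main hb hc
  exact ⟨w, rtg_pb_iff.1 hw1, hw2⟩

/-- The composite relation used for Hindley–Rosen. -/
def Rc (a b : Tm C) : Prop := ∃ m, RedsBeta a m ∧ RedsCC m b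

theorem rc_diamond {t u v : Tm C} (h1 : Rc t u) (h2 : Rc t v) :
    ∃ w, Rc u w ∧ Rc v w := by
  obtain ⟨m1, hb1, hc1⟩ := h1
  obtain ⟨m2, hb2, hc2⟩ := h2
  obtain ⟨n, hn1, hn2⟩ := redsBeta_confluent hb1 hb2
  obtain ⟨p, hp1, hp2⟩ := beta_cc_comm hn1 hc1
  obtain ⟨q, hq1, hq2⟩ := beta_cc_comm hn2 hc2
  obtain ⟨z, hz1, hz2⟩ := redsCC_confluent hp2 hq2
  exact ⟨z, ⟨p, hp1, hz1⟩, ⟨q, hq1, hz2⟩⟩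

theorem stepBeta_step {t u : Tm C} (h : StepBeta t u) : Step t u := step_iff.2 (Or.inl h)
theorem stepCC_step {t u : Tm C} (h : StepCC t u) : Step t u := step_iff.2 (Or.inr h)

theorem redsBeta_reds {t u : Tm C} (h : RedsBeta t u) : Reds t u :=
  Relation.ReflTransGen.mono (fun _ _ h => stepBeta_step h) _ _ h

theorem redsCC_reds {t u : Tm C} (h : RedsCC t u) : Reds t u :=
  Relation.ReflTransGen.mono (fun _ _ h => stepCC_step h) _ _ h

theorem rc_reds {t u : Tm C} (h : Rc t u) : Reds t u := by
  obtain ⟨m, h1, h2⟩ := h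
  exact (redsBeta_reds h1).trans (redsCC_reds h2)

theorem step_rc {t u : Tm C} (h : Step t u) : Rc t u := by
  rcases step_iff.1 h with h | h
  · exact ⟨u, .single h, .refl⟩
  · exact ⟨t, .refl, .single h⟩

theorem reds_rtg_rc {t u : Tm C} (h : Reds t u) : Relation.ReflTransGen Rc t u :=
  Relation.ReflTransGen.mono (fun _ _ h => step_rc h) _ _ h

theorem rtg_rc_reds {t u : Tm C} (h : Relation.ReflTransGen Rc t u) : Reds t u := by
  have h2 : Relation.ReflTransGen (Relation.ReflTransGen (Step (C := C))) t u :=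
    Relation.ReflTransGen.mono (fun _ _ h => rc_reds h) _ _ h
  rw [Relation.reflTransGen_idem] at h2
  exact h2
/-- **Confluence.** Reduction (β-rules plus commuting conversions) in the
simply-typed λ-calculus with sums is confluent. -/
theorem confluence {C : Type} (t u u' : Tm C) (h : Reds t u) (h' : Reds t u') :
    ∃ v : Tm C, Reds u v ∧ Reds u' v := by
  have h1 := reds_rtg_rc h
  have h2 := reds_rtg_rc h'
  obtain ⟨d, hd1, hd2⟩ := Relation.church_rosser
    (fun a b c hab hac => by
      obtain ⟨d, hbd, hcd⟩ := rc_diamond hab hac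
      exact ⟨d, .single hbd, .single hcd⟩) h1 h2
  exact ⟨d, rtg_rc_reds hd1, rtg_rc_reds hd2⟩

end STLCp
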